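/- arXiv:2002.10928 — 4 statements merged into one kernel-verified Lean document; each statement's English description precedes it below -/
import Mathlib

section
/- For n = 2m ≥ 4, the basis (set of nonzero primitive elements) of the monoid of Young diagrams P of order n, with row lengths p_1 ≥ ... ≥ p_n under rowwise addition, satisfying the two inequalities −p_1 + ∑_{i=2}^{m+1} p_i − ∑_{i=m+2}^{2m} p_i ≥ 0 and −∑_{i=1}^{m−1} p_i + ∑_{i=m}^{2m−1} p_i − p_{2m} ≤ 0, together with the condition that the total number of boxes is even, is exactly: the even-size primitive elements of the monoid cut out by the two inequalities alone, together with all sums C_i + C_j with 2 ≤ i ≤ j ≤ n−2 and both i, j odd, where C_i denotes the single-column diagram of height i. -/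
open Finset

/-- A Young diagram of order `n`, given by its (weakly decreasing) row lengths,
vanishing from row `n` on. Rows are indexed from `0`. -/
def IsYoung (n : ℕ) (P : ℕ → ℕ) : Prop :=
  (∀ i, P (i + 1) ≤ P i) ∧ ∀ i, n ≤ i → P i = 0

/-- The total number of boxes of a Young diagram of order `n`. -/
def ysize (n : ℕ) (P : ℕ → ℕ) : ℕ := ∑ i ∈ Finset.range n, P i

/-- The single-column Young diagram of height `i`. -/
def Col (i : ℕ) : ℕ → ℕ := fun r => if r < i then 1 else 0

/-- `P` is a nonzero primitive element of the submonoid `{R | S R}` of Young diagrams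
under rowwise addition: it belongs to it, is nonzero, and is not the sum of two
nonzero elements of it. -/
def PrimitiveIn (S : (ℕ → ℕ) → Prop) (P : ℕ → ℕ) : Prop :=
  S P ∧ P ≠ (fun _ => 0) ∧
  ∀ A B : ℕ → ℕ, S A → S B → A ≠ (fun _ => 0) → B ≠ (fun _ => 0) →
    P ≠ (fun r => A r + B r)

/-- The pair of inequalities (6.2.3.m) on the row lengths `p_i = P (i-1)`:
`-p₁ + ∑_{i=2}^{m+1} p_i - ∑_{i=m+2}^{2m} p_i ≥ 0` and
`-∑_{i=1}^{m-1} p_i + ∑_{i=m}^{2m-1} p_i - p_{2m} ≤ 0`. -/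
def RowIneq (m : ℕ) (P : ℕ → ℕ) : Prop :=
  0 ≤ -(P 0 : ℤ) + ∑ i ∈ Finset.Icc 2 (m + 1), (P (i - 1) : ℤ)
      - ∑ i ∈ Finset.Icc (m + 2) (2 * m), (P (i - 1) : ℤ) ∧
  -(∑ i ∈ Finset.Icc 1 (m - 1), (P (i - 1) : ℤ))
      + ∑ i ∈ Finset.Icc m (2 * m - 1), (P (i - 1) : ℤ) - (P (2 * m - 1) : ℤ) ≤ 0

def G1 (m : ℕ) (P : ℕ → ℕ) : ℤ :=
  -(P 0 : ℤ) + ∑ j ∈ Ico 1 (m+1), (P j : ℤ) - ∑ j ∈ Ico (m+1) (2*m), (P j : ℤ)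
def G2 (m : ℕ) (P : ℕ → ℕ) : ℤ :=
  ∑ j ∈ Ico 0 (m-1), (P j : ℤ) - ∑ j ∈ Ico (m-1) (2*m-1), (P j : ℤ) + (P (2*m-1) : ℤ)

lemma sum_shift (f : ℕ → ℤ) (a b : ℕ) :
    ∑ i ∈ Ico (a+1) (b+1), f (i-1) = ∑ i ∈ Ico a b, f i := by
  rw [← Finset.map_add_right_Ico, Finset.sum_map]
  simp [addRightEmbedding]

lemma sum_shift_c (f : ℕ → ℤ) (a b c : ℕ) :
    ∑ i ∈ Ico (a+c) (b+c), f i = ∑ i ∈ Ico a b, f (i+c) := by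
  rw [← Finset.map_add_right_Ico, Finset.sum_map]
  simp [addRightEmbedding]

lemma rowIneq_iff (m : ℕ) (hm : 2 ≤ m) (P : ℕ → ℕ) :
    RowIneq m P ↔ 0 ≤ G1 m P ∧ 0 ≤ G2 m P := by
  have e1 : ∑ i ∈ Finset.Icc 2 (m + 1), (P (i - 1) : ℤ) = ∑ j ∈ Ico 1 (m+1), (P j : ℤ) := by
    rw [show Finset.Icc 2 (m+1) = Finset.Ico (1+1) ((m+1)+1) by rw [Finset.Ico_add_one_right_eq_Icc]]
    exact sum_shift (fun j => (P j : ℤ)) 1 (m+1)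
  have e2 : ∑ i ∈ Finset.Icc (m + 2) (2 * m), (P (i - 1) : ℤ) = ∑ j ∈ Ico (m+1) (2*m), (P j : ℤ) := by
    rw [show Finset.Icc (m+2) (2*m) = Finset.Ico ((m+1)+1) ((2*m)+1) by
      rw [Finset.Ico_add_one_right_eq_Icc]]
    exact sum_shift (fun j => (P j : ℤ)) (m+1) (2*m)
  have e3 : ∑ i ∈ Finset.Icc 1 (m - 1), (P (i - 1) : ℤ) = ∑ j ∈ Ico 0 (m-1), (P j : ℤ) := by
    rw [show Finset.Icc 1 (m-1) = Finset.Ico (0+1) ((m-1)+1) by rw [Finset.Ico_add_one_right_eq_Icc]]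
    exact sum_shift (fun j => (P j : ℤ)) 0 (m-1)
  have e4 : ∑ i ∈ Finset.Icc m (2*m - 1), (P (i - 1) : ℤ) = ∑ j ∈ Ico (m-1) (2*m-1), (P j : ℤ) := by
    rw [show Finset.Icc m (2*m-1) = Finset.Ico ((m-1)+1) ((2*m-1)+1) by
      rw [Finset.Ico_add_one_right_eq_Icc]; congr 1; omega]
    exact sum_shift (fun j => (P j : ℤ)) (m-1) (2*m-1)
  unfold RowIneq G1 G2
  rw [e1, e2, e3, e4]
  constructor <;> rintro ⟨h1, h2⟩ <;> constructor <;> linarith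

lemma G1_add (m : ℕ) (A B : ℕ → ℕ) : G1 m (fun r => A r + B r) = G1 m A + G1 m B := by
  unfold G1; push_cast; rw [Finset.sum_add_distrib, Finset.sum_add_distrib]; ring

lemma G2_add (m : ℕ) (A B : ℕ → ℕ) : G2 m (fun r => A r + B r) = G2 m A + G2 m B := by
  unfold G2; push_cast; rw [Finset.sum_add_distrib, Finset.sum_add_distrib]; ring

lemma ysize_add (n : ℕ) (A B : ℕ → ℕ) :
    ysize n (fun r => A r + B r) = ysize n A + ysize n B := by
  unfold ysize; rw [Finset.sum_add_distrib]

lemma G1_congr (m : ℕ) (A B : ℕ → ℕ) (h : ∀ r, A r = B r) : G1 m A = G1 m B := by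
  have : A = B := funext h
  rw [this]

-- parity: (ysize - G1) is even
lemma size_split1 (m : ℕ) (hm : 1 ≤ m) (P : ℕ → ℕ) :
    (ysize (2*m) P : ℤ) = (P 0 : ℤ) + ∑ j ∈ Ico 1 (m+1), (P j : ℤ) + ∑ j ∈ Ico (m+1) (2*m), (P j : ℤ) := by
  unfold ysize
  push_cast
  rw [Finset.range_eq_Ico]
  rw [← Finset.sum_Ico_consecutive (fun j => (P j : ℤ)) (show 0 ≤ m+1 by omega) (show m+1 ≤ 2*m by omega)]
  rw [Finset.sum_eq_sum_Ico_succ_bot (show 0 < m+1 by omega) (fun j => (P j : ℤ))]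

lemma size_split2 (m : ℕ) (hm : 1 ≤ m) (P : ℕ → ℕ) :
    (ysize (2*m) P : ℤ) = ∑ j ∈ Ico 0 (m-1), (P j : ℤ) + ∑ j ∈ Ico (m-1) (2*m-1), (P j : ℤ) + (P (2*m-1) : ℤ) := by
  unfold ysize
  push_cast
  rw [Finset.range_eq_Ico]
  rw [← Finset.sum_Ico_consecutive (fun j => (P j : ℤ)) (show 0 ≤ m-1 by omega) (show m-1 ≤ 2*m by omega)]
  rw [show 2*m = (2*m-1)+1 by omega]
  rw [Finset.sum_Ico_succ_top (show m-1 ≤ 2*m-1 by omega) (fun j => (P j : ℤ))]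
  push_cast
  ring

lemma even_size_sub_G1 (m : ℕ) (hm : 1 ≤ m) (P : ℕ → ℕ) :
    Even ((ysize (2*m) P : ℤ) - G1 m P) := by
  rw [size_split1 m hm P]; unfold G1
  exact ⟨(P 0 : ℤ) + ∑ j ∈ Ico (m+1) (2*m), (P j : ℤ), by ring⟩

lemma even_size_sub_G2 (m : ℕ) (hm : 1 ≤ m) (P : ℕ → ℕ) :
    Even ((ysize (2*m) P : ℤ) - G2 m P) := by
  rw [size_split2 m hm P]; unfold G2
  exact ⟨∑ j ∈ Ico (m-1) (2*m-1), (P j : ℤ), by ring⟩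

lemma G1_pos_of_odd (m : ℕ) (hm : 1 ≤ m) (P : ℕ → ℕ) (h : Odd (ysize (2*m) P)) (h0 : 0 ≤ G1 m P) :
    1 ≤ G1 m P := by
  rcases even_size_sub_G1 m hm P with ⟨c, hc⟩
  rcases h with ⟨d, hd⟩
  omega

lemma G2_pos_of_odd (m : ℕ) (hm : 1 ≤ m) (P : ℕ → ℕ) (h : Odd (ysize (2*m) P)) (h0 : 0 ≤ G2 m P) :
    1 ≤ G2 m P := by
  rcases even_size_sub_G2 m hm P with ⟨c, hc⟩
  rcases h with ⟨d, hd⟩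
  omega
lemma young_anti {n : ℕ} {P : ℕ → ℕ} (h : IsYoung n P) : ∀ {i j : ℕ}, i ≤ j → P j ≤ P i := by
  intro i j hij
  induction j with
  | zero => have : i = 0 := by omega
            rw [this]
  | succ k ih =>
    rcases Nat.lt_or_ge i (k+1) with hl | hl
    · exact le_trans (h.1 k) (ih (by omega))
    · have : i = k+1 := by omega
      rw [this]

-- sum of a column over an interval
lemma sum_col (h a b : ℕ) (hab : a ≤ b) :
    ∑ j ∈ Ico a b, (Col h j : ℤ) = ((min b h : ℕ) : ℤ) - ((min a h : ℕ) : ℤ) := by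
  induction b with
  | zero => simp_all
  | succ k ih =>
    rcases Nat.lt_or_ge k a with hk | hk
    · have : a = k+1 := by omega
      subst this; simp
    · rw [Finset.sum_Ico_succ_top hk, ih hk]
      unfold Col
      split_ifs with hkh <;> push_cast <;> omega

lemma col_zero (h : ℕ) (hh : 1 ≤ h) : Col h 0 = 1 := by
  unfold Col; rw [if_pos (by omega)]

lemma G1_col_one (m : ℕ) (hm : 2 ≤ m) : G1 m (Col 1) = -1 := by
  unfold G1
  rw [sum_col 1 1 (m+1) (by omega), sum_col 1 (m+1) (2*m) (by omega), col_zero 1 le_rfl]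
  omega

lemma G2_col_one (m : ℕ) (hm : 2 ≤ m) : G2 m (Col 1) = 1 := by
  unfold G2
  rw [sum_col 1 0 (m-1) (by omega), sum_col 1 (m-1) (2*m-1) (by omega)]
  have : Col 1 (2*m-1) = 0 := by unfold Col; rw [if_neg (by omega)]
  rw [this]
  omega

lemma G1_col_top (m : ℕ) (hm : 2 ≤ m) : G1 m (Col (2*m-1)) = 1 := by
  unfold G1
  rw [sum_col (2*m-1) 1 (m+1) (by omega), sum_col (2*m-1) (m+1) (2*m) (by omega),
    col_zero (2*m-1) (by omega)]
  omega

lemma G2_col_top (m : ℕ) (hm : 2 ≤ m) : G2 m (Col (2*m-1)) = -1 := by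
  unfold G2
  rw [sum_col (2*m-1) 0 (m-1) (by omega), sum_col (2*m-1) (m-1) (2*m-1) (by omega)]
  have : Col (2*m-1) (2*m-1) = 0 := by unfold Col; rw [if_neg (by omega)]
  rw [this]
  omega

lemma G1_col_good (m h : ℕ) (hm : 2 ≤ m) (h3 : 3 ≤ h) (hh : h ≤ 2*m-3) : 1 ≤ G1 m (Col h) := by
  unfold G1
  rw [sum_col h 1 (m+1) (by omega), sum_col h (m+1) (2*m) (by omega), col_zero h (by omega)]
  omega

lemma G2_col_good (m h : ℕ) (hm : 2 ≤ m) (h3 : 3 ≤ h) (hh : h ≤ 2*m-3) : 1 ≤ G2 m (Col h) := by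
  unfold G2
  rw [sum_col h 0 (m-1) (by omega), sum_col h (m-1) (2*m-1) (by omega)]
  have : Col h (2*m-1) = 0 := by unfold Col; rw [if_neg (by omega)]
  rw [this]
  omega

-- Claim A
lemma G1_nonneg_of_flat (m : ℕ) (hm : 2 ≤ m) (B : ℕ → ℕ) (hY : IsYoung (2*m) B)
    (h01 : B 1 = B 0) : 0 ≤ G1 m B := by
  unfold G1
  rw [Finset.sum_eq_sum_Ico_succ_bot (show 1 < m+1 by omega) (fun j => (B j : ℤ))]
  have hs : ∑ j ∈ Ico (m+1) (2*m), (B j : ℤ) = ∑ j ∈ Ico 2 (m+1), (B (j + (m-1)) : ℤ) := by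
    have he : Ico (m+1) (2*m) = Ico (2+(m-1)) ((m+1)+(m-1)) := by
      rw [show 2+(m-1)=m+1 by omega, show (m+1)+(m-1)=2*m by omega]
    rw [he, sum_shift_c (fun j => (B j : ℤ)) 2 (m+1) (m-1)]
  rw [hs]
  have hle : ∑ j ∈ Ico 2 (m+1), (B (j + (m-1)) : ℤ) ≤ ∑ j ∈ Ico 2 (m+1), (B j : ℤ) := by
    apply Finset.sum_le_sum
    intro i _
    exact_mod_cast young_anti hY (by omega)
  have : (B 1 : ℤ) = (B 0 : ℤ) := by exact_mod_cast h01
  linarith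

-- Claim B
lemma G2_nonneg_of_flat (m : ℕ) (hm : 2 ≤ m) (B : ℕ → ℕ) (hY : IsYoung (2*m) B)
    (htop : B (2*m-1) = B (2*m-2)) : 0 ≤ G2 m B := by
  unfold G2
  rw [show (2*m-1) = (2*m-2)+1 by omega]
  rw [Finset.sum_Ico_succ_top (show m-1 ≤ 2*m-2 by omega) (fun j => (B j : ℤ))]
  have hs : ∑ j ∈ Ico (m-1) (2*m-2), (B j : ℤ) = ∑ j ∈ Ico 0 (m-1), (B (j + (m-1)) : ℤ) := by
    have he : Ico (m-1) (2*m-2) = Ico (0+(m-1)) ((m-1)+(m-1)) := by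
      rw [show 0+(m-1)=m-1 by omega, show (m-1)+(m-1)=2*m-2 by omega]
    rw [he, sum_shift_c (fun j => (B j : ℤ)) 0 (m-1) (m-1)]
  rw [hs]
  have hle : ∑ j ∈ Ico 0 (m-1), (B (j + (m-1)) : ℤ) ≤ ∑ j ∈ Ico 0 (m-1), (B j : ℤ) := by
    apply Finset.sum_le_sum
    intro i _
    exact_mod_cast young_anti hY (by omega)
  have : (B ((2*m-2)+1) : ℤ) = (B (2*m-2) : ℤ) := by
    rw [show (2*m-2)+1 = 2*m-1 by omega]; exact_mod_cast htop
  linarith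

lemma young_sub (n k : ℕ) (B : ℕ → ℕ) (hY : IsYoung n B) (hcol : B (k+1) < B k) :
    IsYoung n (fun r => B r - Col (k+1) r) := by
  constructor
  · intro i
    simp only [Col]
    split_ifs with h1 h2 h2
    · exact Nat.sub_le_sub_right (hY.1 i) 1
    · -- i+1 < k+1 but ¬ i < k+1 : impossible
      omega
    · -- i+1 not < k+1, i < k+1: so i = k
      have : i = k := by omega
      subst this
      omega
    · exact Nat.sub_le_sub_right (hY.1 i) 0
  · intro i hi
    simp only [Col]
    rw [hY.2 i hi]
    omega

lemma sub_add_col (n k : ℕ) (B : ℕ → ℕ) (hY : IsYoung n B) (hcol : B (k+1) < B k) :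
    ∀ r, Col (k+1) r + (B r - Col (k+1) r) = B r := by
  intro r
  unfold Col
  split_ifs with h
  · have : B k ≤ B r := young_anti hY (by omega)
    omega
  · omega

lemma young_col (n h : ℕ) (hh : h ≤ n) : IsYoung n (Col h) := by
  constructor
  · intro i; unfold Col; split_ifs <;> omega
  · intro i hi; unfold Col; rw [if_neg (by omega)]

lemma ysize_col (n h : ℕ) : ysize n (Col h) = min n h := by
  induction n with
  | zero => simp [ysize]
  | succ k ih =>
    unfold ysize at *
    rw [Finset.sum_range_succ, ih]
    unfold Col
    split_ifs <;> omega

lemma col_ne_zero (h : ℕ) (hh : 1 ≤ h) : Col h ≠ (fun _ => 0) := by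
  intro hc
  have := congrFun hc 0
  rw [col_zero h hh] at this
  exact one_ne_zero this

lemma even_sum_pair (B : ℕ → ℕ) (M : ℕ) (h : ∀ j, j < M → B (2*j+1) = B (2*j)) :
    Even (∑ i ∈ range (2*M), B i) := by
  induction M with
  | zero => simp
  | succ k ih =>
    rw [show 2*(k+1) = (2*k+1)+1 by ring, Finset.sum_range_succ, Finset.sum_range_succ]
    have h1 : B (2*k+1) = B (2*k) := h k (by omega)
    have h2 : Even (∑ i ∈ range (2*k), B i) := ih (fun j hj => h j (by omega))
    rcases h2 with ⟨c, hc⟩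
    exact ⟨c + B (2*k), by omega⟩

lemma exists_odd_col (m : ℕ) (B : ℕ → ℕ) (hY : IsYoung (2*m) B)
    (hodd : Odd (ysize (2*m) B)) :
    ∃ k, Odd (k+1) ∧ k+1 ≤ 2*m ∧ B (k+1) < B k := by
  by_contra hc
  push_neg at hc
  have hall : ∀ j, j < m → B (2*j+1) = B (2*j) := by
    intro j hj
    have h1 : B (2*j+1) ≤ B (2*j) := hY.1 _
    have h2 : B (2*j) ≤ B (2*j+1) := by
      apply hc (2*j)
      · exact ⟨j, by ring⟩
      · omega
    omega
  have := even_sum_pair B m hall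
  unfold ysize at hodd
  rcases hodd with ⟨c, hc'⟩
  rcases this with ⟨d, hd⟩
  omega

lemma G1_split (m h : ℕ) (B D : ℕ → ℕ) (hadd : ∀ r, Col h r + D r = B r) :
    G1 m B = G1 m (Col h) + G1 m D := by
  rw [show B = (fun r => Col h r + D r) from funext (fun r => (hadd r).symm)]
  exact G1_add m _ _

lemma G2_split (m h : ℕ) (B D : ℕ → ℕ) (hadd : ∀ r, Col h r + D r = B r) :
    G2 m B = G2 m (Col h) + G2 m D := by
  rw [show B = (fun r => Col h r + D r) from funext (fun r => (hadd r).symm)]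
  exact G2_add m _ _

lemma ysize_split (n h : ℕ) (B D : ℕ → ℕ) (hadd : ∀ r, Col h r + D r = B r) :
    ysize n B = min n h + ysize n D := by
  rw [show B = (fun r => Col h r + D r) from funext (fun r => (hadd r).symm)]
  rw [ysize_add, ysize_col]

/-- The removal lemma: from an odd-size diagram in the cone one can remove a
single odd column staying in the cone. -/
lemma removal (m : ℕ) (hm : 2 ≤ m) (B : ℕ → ℕ) (hY : IsYoung (2*m) B)
    (hG1 : 0 ≤ G1 m B) (hG2 : 0 ≤ G2 m B) (hodd : Odd (ysize (2*m) B)) :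
    ∃ k, Odd (k+1) ∧ k+1 ≤ 2*m ∧ B (k+1) < B k ∧
      IsYoung (2*m) (fun r => B r - Col (k+1) r) ∧
      (∀ r, Col (k+1) r + (B r - Col (k+1) r) = B r) ∧
      0 ≤ G1 m (fun r => B r - Col (k+1) r) ∧
      0 ≤ G2 m (fun r => B r - Col (k+1) r) ∧
      (k+1 = 1 ∨ k+1 = 2*m-1 ∨ (1 ≤ G1 m (Col (k+1)) ∧ 1 ≤ G2 m (Col (k+1)))) := by
  have hG1' : 1 ≤ G1 m B := G1_pos_of_odd m (by omega) B hodd hG1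
  have hG2' : 1 ≤ G2 m B := G2_pos_of_odd m (by omega) B hodd hG2
  by_cases h1 : B 1 < B 0
  · refine ⟨0, ⟨0, by omega⟩, by omega, h1, young_sub _ _ _ hY h1,
      sub_add_col _ _ _ hY h1, ?_, ?_, Or.inl rfl⟩
    · have := G1_split m 1 B _ (sub_add_col _ _ _ hY h1)
      rw [G1_col_one m hm] at this
      omega
    · have := G2_split m 1 B _ (sub_add_col _ _ _ hY h1)
      rw [G2_col_one m hm] at this
      omega
  · by_cases h2 : B (2*m-1) < B (2*m-2)
    · have hk : (2*m-2)+1 = 2*m-1 := by omega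
      have h2' : B ((2*m-2)+1) < B (2*m-2) := by rw [hk]; exact h2
      refine ⟨2*m-2, ⟨m-1, by omega⟩, by omega, h2', young_sub _ _ _ hY h2',
        sub_add_col _ _ _ hY h2', ?_, ?_, Or.inr (Or.inl hk)⟩
      · have := G1_split m ((2*m-2)+1) B _ (sub_add_col _ _ _ hY h2')
        rw [hk, G1_col_top m hm] at this
        rw [hk]
        omega
      · have := G2_split m ((2*m-2)+1) B _ (sub_add_col _ _ _ hY h2')
        rw [hk, G2_col_top m hm] at this
        rw [hk]
        omega
    · -- no columns of height 1 or 2m-1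
      obtain ⟨k, hko, hkle, hkcol⟩ := exists_odd_col m B hY hodd
      have e1 : B 1 = B 0 := by have := young_anti hY (show 0 ≤ 1 by omega); omega
      have e2 : B (2*m-1) = B (2*m-2) := by
        have := young_anti hY (show 2*m-2 ≤ 2*m-1 by omega); omega
      have hne1 : k+1 ≠ 1 := by
        intro h
        have hk0 : k = 0 := by omega
        subst hk0
        exact h1 hkcol
      have hne2 : k+1 ≠ 2*m-1 := by
        intro h
        have hk0 : k = 2*m-2 := by omega
        subst hk0
        rw [show 2*m-2+1 = 2*m-1 by omega] at hkcol
        exact h2 hkcol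
      have hne3 : k+1 ≠ 2*m := by rcases hko with ⟨c,hc⟩; omega
      have h3 : 3 ≤ k+1 := by rcases hko with ⟨c,hc⟩; omega
      have hle : k+1 ≤ 2*m-3 := by rcases hko with ⟨c,hc⟩; omega
      refine ⟨k, hko, hkle, hkcol, young_sub _ _ _ hY hkcol,
        sub_add_col _ _ _ hY hkcol, ?_, ?_,
        Or.inr (Or.inr ⟨G1_col_good m (k+1) hm h3 hle, G2_col_good m (k+1) hm h3 hle⟩)⟩
      · apply G1_nonneg_of_flat m hm _ (young_sub _ _ _ hY hkcol)
        show B 1 - Col (k+1) 1 = B 0 - Col (k+1) 0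
        simp only [Col]
        rw [if_pos (show (1:ℕ) < k+1 by omega), if_pos (show (0:ℕ) < k+1 by omega), e1]
      · apply G2_nonneg_of_flat m hm _ (young_sub _ _ _ hY hkcol)
        show B (2*m-1) - Col (k+1) (2*m-1) = B (2*m-2) - Col (k+1) (2*m-2)
        simp only [Col]
        rw [if_neg (show ¬ 2*m-1 < k+1 by omega), if_neg (show ¬ 2*m-2 < k+1 by omega), e2]

lemma young_add (n : ℕ) (A B : ℕ → ℕ) (hA : IsYoung n A) (hB : IsYoung n B) :
    IsYoung n (fun r => A r + B r) := by
  constructor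
  · intro i; exact Nat.add_le_add (hA.1 i) (hB.1 i)
  · intro i hi
    show A i + B i = 0
    rw [hA.2 i hi, hB.2 i hi]

lemma ne_zero_of_pos {A : ℕ → ℕ} (h : 0 < A 0) : A ≠ (fun _ => 0) := by
  intro hc
  have := congrFun hc 0
  omega

lemma young_zero_of_zero {n : ℕ} {A : ℕ → ℕ} (hY : IsYoung n A) (h : A 0 = 0) :
    A = (fun _ => 0) := by
  funext r
  have := young_anti hY (Nat.zero_le r)
  omega

lemma eq_col_of_le_one (n : ℕ) (A : ℕ → ℕ) (hY : IsYoung n A) (h1 : ∀ r, A r ≤ 1) :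
    A = Col (ysize n A) := by
  funext r
  rcases Nat.lt_or_ge r (ysize n A) with hr | hr
  · -- want A r = 1
    unfold Col
    rw [if_pos hr]
    by_contra hc
    have hA0 : A r = 0 := by have := h1 r; omega
    have hub : ysize n A ≤ ysize n (Col r) := by
      apply Finset.sum_le_sum
      intro i _
      unfold Col
      split_ifs with hir
      · exact h1 i
      · have := young_anti hY (show r ≤ i by omega)
        omega
    rw [ysize_col] at hub
    omega
  · -- want A r = 0
    unfold Col
    rw [if_neg (by omega)]
    by_contra hc
    have hA1 : A r = 1 := by have := h1 r; omega
    have hrn : r < n := by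
      by_contra hrn
      rw [hY.2 r (by omega)] at hA1
      omega
    have hlb : ysize n (Col (r+1)) ≤ ysize n A := by
      apply Finset.sum_le_sum
      intro i _
      unfold Col
      split_ifs with hir
      · have := young_anti hY (show i ≤ r by omega)
        omega
      · omega
    rw [ysize_col] at hlb
    omega

/-- For `n = 2m ≥ 4`, the basis of the monoid of Young diagrams of order `n`
satisfying the two inequalities and having an even number of boxes consists of the
even-size primitive elements of the monoid cut out by the two inequalities alone,
together with the sums `C_i + C_j` for `2 ≤ i ≤ j ≤ n-2` with `i`, `j` odd. -/
theorem stmt_11 (m n : ℕ) (hm : 2 ≤ m) (hn : n = 2 * m) (P : ℕ → ℕ) :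
    PrimitiveIn (fun R => IsYoung n R ∧ RowIneq m R ∧ Even (ysize n R)) P ↔
    ((PrimitiveIn (fun R => IsYoung n R ∧ RowIneq m R) P ∧ Even (ysize n P)) ∨
      (∃ i j : ℕ, 2 ≤ i ∧ i ≤ j ∧ j ≤ n - 2 ∧ Odd i ∧ Odd j ∧
        P = fun r => Col i r + Col j r)) := by
  subst hn
  constructor
  · rintro ⟨⟨hY, hIneq, hEven⟩, hne, hprim⟩
    by_cases hp0 : ∀ A B : ℕ → ℕ, (IsYoung (2*m) A ∧ RowIneq m A) →
        (IsYoung (2*m) B ∧ RowIneq m B) → A ≠ (fun _ => 0) → B ≠ (fun _ => 0) →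
        P ≠ (fun r => A r + B r)
    · exact Or.inl ⟨⟨⟨hY, hIneq⟩, hne, hp0⟩, hEven⟩
    · right
      push_neg at hp0
      obtain ⟨A, B, hSA, hSB, hA0, hB0, hPAB⟩ := hp0
      obtain ⟨hYA, hIA⟩ := hSA
      obtain ⟨hYB, hIB⟩ := hSB
      rw [rowIneq_iff m hm] at hIA hIB
      have hsize : ysize (2*m) P = ysize (2*m) A + ysize (2*m) B := by
        rw [hPAB]; exact ysize_add (2*m) A B
      have hoddA : Odd (ysize (2*m) A) := by
        rw [← Nat.not_even_iff_odd]
        intro hEA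
        have hEB : Even (ysize (2*m) B) := by
          rcases hEven with ⟨c, hc⟩; rcases hEA with ⟨d, hd⟩
          exact ⟨ysize (2*m) B / 2 + ysize (2*m) B % 2, by omega⟩
        exact hprim A B ⟨hYA, (rowIneq_iff m hm A).mpr hIA, hEA⟩
          ⟨hYB, (rowIneq_iff m hm B).mpr hIB, hEB⟩ hA0 hB0 hPAB
      have hoddB : Odd (ysize (2*m) B) := by
        rcases hEven with ⟨c, hc⟩; rcases hoddA with ⟨d, hd⟩
        exact ⟨(ysize (2*m) B - 1) / 2, by omega⟩
      obtain ⟨a, hoa, hale, hacol, hYDA, haddA, hg1A, hg2A, htagA⟩ :=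
        removal m hm A hYA hIA.1 hIA.2 hoddA
      obtain ⟨b, hob, hble, hbcol, hYDB, haddB, hg1B, hg2B, htagB⟩ :=
        removal m hm B hYB hIB.1 hIB.2 hoddB
      set DA := fun r => A r - Col (a+1) r with hDA
      set DB := fun r => B r - Col (b+1) r with hDB
      have hsizeDA : ysize (2*m) A = (a+1) + ysize (2*m) DA := by
        have := ysize_split (2*m) (a+1) A DA haddA
        rw [show min (2*m) (a+1) = a+1 by omega] at this
        exact this
      have hsizeDB : ysize (2*m) B = (b+1) + ysize (2*m) DB := by
        have := ysize_split (2*m) (b+1) B DB haddB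
        rw [show min (2*m) (b+1) = b+1 by omega] at this
        exact this
      -- exclusion case 1 : both heights equal 1
      by_cases hcase1 : a+1 = 1 ∧ b+1 = 1
      · exfalso
        obtain ⟨ha1, hb1⟩ := hcase1
        have hc1 : G1 m (Col (a+1)) = -1 := by rw [ha1]; exact G1_col_one m hm
        have hc2 : G2 m (Col (a+1)) = 1 := by rw [ha1]; exact G2_col_one m hm
        have hAne : DA ≠ (fun _ => 0) := by
          intro hc
          have hAcol : A = Col (a+1) := by
            funext r
            have h1 := haddA r
            have h2 : A r - Col (a+1) r = 0 := congrFun hc r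
            omega
          have := hIA.1
          rw [hAcol, hc1] at this
          norm_num at this
        have hB' : IsYoung (2*m) (fun r => B r + Col (a+1) r) :=
          young_add _ _ _ hYB (young_col (2*m) (a+1) (by omega))
        have hg1B' : 0 ≤ G1 m (fun r => B r + Col (a+1) r) := by
          rw [G1_add, hc1]
          have := G1_pos_of_odd m (by omega) B hoddB hIB.1
          omega
        have hg2B' : 0 ≤ G2 m (fun r => B r + Col (a+1) r) := by
          rw [G2_add, hc2]
          omega
        have hEDA : Even (ysize (2*m) DA) := by
          rcases hoddA with ⟨c, hc⟩
          exact ⟨ysize (2*m) DA / 2 + ysize (2*m) DA % 2, by omega⟩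
        have hEB' : Even (ysize (2*m) (fun r => B r + Col (a+1) r)) := by
          rw [ysize_add, ysize_col, show min (2*m) (a+1) = 1 by omega]
          rcases hoddB with ⟨c, hc⟩
          exact ⟨c+1, by omega⟩
        apply hprim DA (fun r => B r + Col (a+1) r)
          ⟨hYDA, (rowIneq_iff m hm DA).mpr ⟨hg1A, hg2A⟩, hEDA⟩
          ⟨hB', (rowIneq_iff m hm _).mpr ⟨hg1B', hg2B'⟩, hEB'⟩
          hAne (ne_zero_of_pos (by show 0 < B 0 + Col (a+1) 0; rw [col_zero (a+1) (by omega)]; omega))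
        funext r
        have h1 := haddA r
        have h2 := congrFun hPAB r
        show P r = (A r - Col (a+1) r) + (B r + Col (a+1) r)
        omega
      by_cases hcase2 : a+1 = 2*m-1 ∧ b+1 = 2*m-1
      · exfalso
        obtain ⟨ha1, hb1⟩ := hcase2
        have hc1 : G1 m (Col (a+1)) = 1 := by rw [ha1]; exact G1_col_top m hm
        have hc2 : G2 m (Col (a+1)) = -1 := by rw [ha1]; exact G2_col_top m hm
        have hAne : DA ≠ (fun _ => 0) := by
          intro hc
          have hAcol : A = Col (a+1) := by
            funext r
            have h1 := haddA r
            have h2 : A r - Col (a+1) r = 0 := congrFun hc r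
            omega
          have := hIA.2
          rw [hAcol, hc2] at this
          norm_num at this
        have hB' : IsYoung (2*m) (fun r => B r + Col (a+1) r) :=
          young_add _ _ _ hYB (young_col (2*m) (a+1) (by omega))
        have hg1B' : 0 ≤ G1 m (fun r => B r + Col (a+1) r) := by
          rw [G1_add, hc1]
          omega
        have hg2B' : 0 ≤ G2 m (fun r => B r + Col (a+1) r) := by
          rw [G2_add, hc2]
          have := G2_pos_of_odd m (by omega) B hoddB hIB.2
          omega
        have hEDA : Even (ysize (2*m) DA) := by
          rcases hoddA with ⟨c, hc⟩
          exact ⟨ysize (2*m) DA / 2 + ysize (2*m) DA % 2, by omega⟩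
        have hEB' : Even (ysize (2*m) (fun r => B r + Col (a+1) r)) := by
          rw [ysize_add, ysize_col, show min (2*m) (a+1) = a+1 by omega]
          rcases hoddB with ⟨c, hc⟩; rcases hoa with ⟨d, hd⟩
          exact ⟨c + (a+1)/2 + (a+1) % 2, by omega⟩
        apply hprim DA (fun r => B r + Col (a+1) r)
          ⟨hYDA, (rowIneq_iff m hm DA).mpr ⟨hg1A, hg2A⟩, hEDA⟩
          ⟨hB', (rowIneq_iff m hm _).mpr ⟨hg1B', hg2B'⟩, hEB'⟩
          hAne (ne_zero_of_pos (by show 0 < B 0 + Col (a+1) 0; rw [col_zero (a+1) (by omega)]; omega))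
        funext r
        have h1 := haddA r
        have h2 := congrFun hPAB r
        show P r = (A r - Col (a+1) r) + (B r + Col (a+1) r)
        omega
      · -- general case
        have hQg : 0 ≤ G1 m (Col (a+1)) + G1 m (Col (b+1)) ∧
            0 ≤ G2 m (Col (a+1)) + G2 m (Col (b+1)) := by
          rcases htagA with h | h | h <;> rcases htagB with h' | h' | h'
          · exact absurd ⟨h, h'⟩ hcase1
          · rw [h, h', G1_col_one m hm, G2_col_one m hm, G1_col_top m hm, G2_col_top m hm]
            norm_num
          · rw [h, G1_col_one m hm, G2_col_one m hm]
            constructor <;> omega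
          · rw [h, h', G1_col_one m hm, G2_col_one m hm, G1_col_top m hm, G2_col_top m hm]
            norm_num
          · exact absurd ⟨h, h'⟩ hcase2
          · rw [h, G1_col_top m hm, G2_col_top m hm]
            constructor <;> omega
          · rw [h', G1_col_one m hm, G2_col_one m hm]
            constructor <;> omega
          · rw [h', G1_col_top m hm, G2_col_top m hm]
            constructor <;> omega
          · constructor <;> omega
        set Q := fun r => Col (a+1) r + Col (b+1) r with hQ
        set R := fun r => DA r + DB r with hR
        have hPQR : P = fun r => Q r + R r := by
          funext r
          have h1 := haddA r
          have h2 := haddB r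
          have h3 := congrFun hPAB r
          show P r = (Col (a+1) r + Col (b+1) r) + ((A r - Col (a+1) r) + (B r - Col (b+1) r))
          omega
        have hQY : IsYoung (2*m) Q :=
          young_add _ _ _ (young_col _ _ (by omega)) (young_col _ _ (by omega))
        have hQI : RowIneq m Q := by
          apply (rowIneq_iff m hm Q).mpr
          rw [hQ, G1_add, G2_add]
          exact hQg
        have hQE : Even (ysize (2*m) Q) := by
          rw [hQ, ysize_add, ysize_col, ysize_col,
            show min (2*m) (a+1) = a+1 by omega, show min (2*m) (b+1) = b+1 by omega]
          rcases hoa with ⟨c, hc⟩; rcases hob with ⟨d, hd⟩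
          exact ⟨c+d+1, by omega⟩
        have hQne : Q ≠ (fun _ => 0) := by
          apply ne_zero_of_pos
          show 0 < Col (a+1) 0 + Col (b+1) 0
          rw [col_zero _ (by omega)]
          omega
        have hRY : IsYoung (2*m) R := young_add _ _ _ hYDA hYDB
        have hRI : RowIneq m R := by
          apply (rowIneq_iff m hm R).mpr
          rw [hR, G1_add, G2_add]
          constructor <;> [linarith; linarith]
        have hRE : Even (ysize (2*m) R) := by
          rw [hR, ysize_add]
          rcases hoddA with ⟨c, hc⟩; rcases hoddB with ⟨d, hd⟩
          rcases hoa with ⟨c', hc'⟩; rcases hob with ⟨d', hd'⟩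
          exact ⟨(ysize (2*m) DA + ysize (2*m) DB)/2 + (ysize (2*m) DA + ysize (2*m) DB) % 2,
            by omega⟩
        have hR0 : R = (fun _ => 0) := by
          by_contra hR0
          exact hprim Q R ⟨hQY, hQI, hQE⟩ ⟨hRY, hRI, hRE⟩ hQne hR0 hPQR
        have hAcol : A = Col (a+1) := by
          funext r
          have h1 := haddA r
          have h2 : (A r - Col (a+1) r) + (B r - Col (b+1) r) = 0 := congrFun hR0 r
          show A r = Col (a+1) r
          omega
        have hBcol : B = Col (b+1) := by
          funext r
          have h1 := haddB r
          have h2 : (A r - Col (a+1) r) + (B r - Col (b+1) r) = 0 := congrFun hR0 r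
          show B r = Col (b+1) r
          omega
        have hane1 : a+1 ≠ 1 := by
          intro h
          rw [hAcol, h, G1_col_one m hm] at hIA
          exact absurd hIA.1 (by norm_num)
        have hane2 : a+1 ≠ 2*m-1 := by
          intro h
          rw [hAcol, h, G2_col_top m hm] at hIA
          exact absurd hIA.2 (by norm_num)
        have hbne1 : b+1 ≠ 1 := by
          intro h
          rw [hBcol, h, G1_col_one m hm] at hIB
          exact absurd hIB.1 (by norm_num)
        have hbne2 : b+1 ≠ 2*m-1 := by
          intro h
          rw [hBcol, h, G2_col_top m hm] at hIB
          exact absurd hIB.2 (by norm_num)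
        have hane3 : a+1 ≤ 2*m-2 := by rcases hoa with ⟨c, hc⟩; omega
        have hbne3 : b+1 ≤ 2*m-2 := by rcases hob with ⟨c, hc⟩; omega
        have hPfin : P = fun r => Col (a+1) r + Col (b+1) r := by
          rw [hPAB, hAcol, hBcol]
        rcases le_total (a+1) (b+1) with hab | hab
        · exact ⟨a+1, b+1, by omega, hab, by omega, hoa, hob, hPfin⟩
        · refine ⟨b+1, a+1, by omega, hab, by omega, hob, hoa, ?_⟩
          rw [hPfin]
          funext r
          exact Nat.add_comm _ _
  · rintro (⟨⟨⟨hY, hIneq⟩, hne, hprim⟩, hEven⟩ | ⟨i, j, h2i, hij, hjle, hoi, hoj, hP⟩)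
    · exact ⟨⟨hY, hIneq, hEven⟩, hne,
        fun A B hA hB => hprim A B ⟨hA.1, hA.2.1⟩ ⟨hB.1, hB.2.1⟩⟩
    · subst hP
      have h3i : 3 ≤ i := by rcases hoi with ⟨c, hc⟩; omega
      have h3j : 3 ≤ j := by rcases hoj with ⟨c, hc⟩; omega
      have hjle' : j ≤ 2*m-3 := by rcases hoj with ⟨c, hc⟩; omega
      have hile' : i ≤ 2*m-3 := by omega
      refine ⟨⟨young_add _ _ _ (young_col _ _ (by omega)) (young_col _ _ (by omega)),
        (rowIneq_iff m hm _).mpr ?_, ?_⟩, ne_zero_of_pos ?_, ?_⟩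
      · rw [G1_add, G2_add]
        have g1i := G1_col_good m i hm h3i hile'
        have g1j := G1_col_good m j hm h3j hjle'
        have g2i := G2_col_good m i hm h3i hile'
        have g2j := G2_col_good m j hm h3j hjle'
        constructor <;> linarith
      · rw [ysize_add, ysize_col, ysize_col,
          show min (2*m) i = i by omega, show min (2*m) j = j by omega]
        rcases hoi with ⟨c, hc⟩; rcases hoj with ⟨d, hd⟩
        exact ⟨c+d+1, by omega⟩
      · show 0 < Col i 0 + Col j 0
        rw [col_zero i (by omega)]
        omega
      · intro A B hSA hSB hA0 hB0 heq
        obtain ⟨hYA, hIA, hEA⟩ := hSA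
        obtain ⟨hYB, hIB, hEB⟩ := hSB
        have hpt : ∀ r, A r + B r = Col i r + Col j r := fun r => (congrFun heq r).symm
        have hA0p : 0 < A 0 := by
          rcases Nat.eq_zero_or_pos (A 0) with h | h
          · exact absurd (young_zero_of_zero hYA h) hA0
          · exact h
        have hB0p : 0 < B 0 := by
          rcases Nat.eq_zero_or_pos (B 0) with h | h
          · exact absurd (young_zero_of_zero hYB h) hB0
          · exact h
        have h00 : A 0 + B 0 = 2 := by
          have := hpt 0
          rw [col_zero i (by omega), col_zero j (by omega)] at this
          omega
        have hA1 : ∀ r, A r ≤ 1 := by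
          intro r
          have := young_anti hYA (Nat.zero_le r)
          omega
        have hB1 : ∀ r, B r ≤ 1 := by
          intro r
          have := young_anti hYB (Nat.zero_le r)
          omega
        have hAc := eq_col_of_le_one (2*m) A hYA hA1
        have hBc := eq_col_of_le_one (2*m) B hYB hB1
        set α := ysize (2*m) A with hα
        set β := ysize (2*m) B with hβ
        have hpt' : ∀ r, Col α r + Col β r = Col i r + Col j r := by
          intro r
          rw [← congrFun hAc r, ← congrFun hBc r]
          exact hpt r
        have hαi : i ≤ α ∧ i ≤ β := by
          have h := hpt' (i-1)
          simp only [Col] at h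
          rw [if_pos (show i-1 < i by omega), if_pos (show i-1 < j by omega)] at h
          split_ifs at h <;> constructor <;> omega
        have hαi' : α ≤ i ∨ β ≤ i := by
          have h := hpt' i
          simp only [Col] at h
          rw [if_neg (show ¬ i < i by omega)] at h
          split_ifs at h <;> omega
        have hsum : α + β = i + j := by
          have h1 : ysize (2*m) (fun r => A r + B r) = α + β := ysize_add (2*m) A B
          have h2 : ysize (2*m) (fun r => Col i r + Col j r) =
              min (2*m) i + min (2*m) j := by
            rw [ysize_add, ysize_col, ysize_col]
          rw [← heq, h2] at h1
          omega
        rcases hαi' with h | h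
        · have : α = i := by omega
          rcases hEA with ⟨c, hc⟩; rcases hoi with ⟨d, hd⟩
          omega
        · have : β = i := by omega
          have : α = j := by omega
          rcases hEA with ⟨c, hc⟩; rcases hoj with ⟨d, hd⟩
          omega
end

section
/- For n = 2m, the basis of the monoid of Young diagrams of order n satisfying the inequalities ∑_{i=1}^{n−1} min(i−2, n−i) x_i ≥ 0 and ∑_{i=1}^{n−1} min(i, n−i−2) x_i ≥ 0 (where x_i is the number of columns of height i) equals {C_i : 2 ≤ i ≤ n−2} ∪ {C_n} ∪ {C_i + a·C_1 : 0 < a ≤ min(i−2, n−i)} ∪ {C_i + a·C_{n−1} : 0 < a ≤ min(i, n−i−2)}. -/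
/-- The coordinate form of the inequalities: writing `x_i = P (i-1) - P i` for the
number of columns of height `i`, `∑_{i=1}^{n-1} min(i-2, n-i)·x_i ≥ 0` and
`∑_{i=1}^{n-1} min(i, n-i-2)·x_i ≥ 0`. -/
def CoordIneq (n : ℕ) (P : ℕ → ℕ) : Prop :=
  0 ≤ ∑ i ∈ Finset.Icc 1 (n - 1), min ((i : ℤ) - 2) ((n : ℤ) - i) * ((P (i - 1) : ℤ) - (P i : ℤ)) ∧
  0 ≤ ∑ i ∈ Finset.Icc 1 (n - 1), min (i : ℤ) ((n : ℤ) - i - 2) * ((P (i - 1) : ℤ) - (P i : ℤ))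

namespace YD12

def Ls (c : ℕ → ℤ) (n : ℕ) (P : ℕ → ℕ) : ℤ :=
  ∑ i ∈ Finset.Icc 1 (n - 1), c i * ((P (i - 1) : ℤ) - (P i : ℤ))

def cF (n : ℕ) : ℕ → ℤ := fun i => min ((i : ℤ) - 2) ((n : ℤ) - i)
def cG (n : ℕ) : ℕ → ℤ := fun i => min (i : ℤ) ((n : ℤ) - i - 2)

lemma coord_iff (n : ℕ) (P : ℕ → ℕ) :
    CoordIneq n P ↔ 0 ≤ Ls (cF n) n P ∧ 0 ≤ Ls (cG n) n P := Iff.rfl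

lemma young_mono {n : ℕ} {P : ℕ → ℕ} (h : IsYoung n P) {r s : ℕ} (hrs : r ≤ s) :
    P s ≤ P r := by
  induction s, hrs using Nat.le_induction with
  | base => exact le_refl _
  | succ k hk ih => exact le_trans (h.1 k) ih

lemma young_zero {n : ℕ} {P : ℕ → ℕ} (h : IsYoung n P) (h0 : P 0 = 0) :
    P = fun _ => 0 := by
  funext r
  have := young_mono h (Nat.zero_le r)
  omega

lemma young_add {n : ℕ} {A B : ℕ → ℕ} (hA : IsYoung n A) (hB : IsYoung n B) :
    IsYoung n (fun r => A r + B r) :=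
  ⟨fun i => Nat.add_le_add (hA.1 i) (hB.1 i),
   fun i hi => by simp only []; rw [hA.2 i hi, hB.2 i hi]⟩

lemma young_col {n i : ℕ} (h : i ≤ n) : IsYoung n (Col i) := by
  constructor
  · intro r; unfold Col; split_ifs <;> omega
  · intro r hr; unfold Col; rw [if_neg]; omega

lemma young_smul {n : ℕ} {A : ℕ → ℕ} (a : ℕ) (hA : IsYoung n A) :
    IsYoung n (fun r => a * A r) :=
  ⟨fun i => Nat.mul_le_mul_left a (hA.1 i),
   fun i hi => by simp only []; rw [hA.2 i hi, Nat.mul_zero]⟩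

lemma Ls_add (c : ℕ → ℤ) (n : ℕ) (A B : ℕ → ℕ) :
    Ls c n (fun r => A r + B r) = Ls c n A + Ls c n B := by
  unfold Ls
  rw [← Finset.sum_add_distrib]
  apply Finset.sum_congr rfl
  intro j _
  push_cast
  ring

lemma Ls_smul (c : ℕ → ℤ) (n : ℕ) (a : ℕ) (A : ℕ → ℕ) :
    Ls c n (fun r => a * A r) = a * Ls c n A := by
  unfold Ls
  rw [Finset.mul_sum]
  apply Finset.sum_congr rfl
  intro j _
  push_cast
  ring

lemma col_diff {i j : ℕ} (hj : 1 ≤ j) :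
    ((Col i (j - 1) : ℤ) - (Col i j : ℤ)) = if j = i then 1 else 0 := by
  unfold Col
  split_ifs <;> simp_all <;> omega

lemma Ls_col (c : ℕ → ℤ) (n : ℕ) {i : ℕ} (hi : 1 ≤ i) (hi' : i ≤ n - 1) :
    Ls c n (Col i) = c i := by
  unfold Ls
  rw [Finset.sum_eq_single_of_mem i (Finset.mem_Icc.mpr ⟨hi, hi'⟩)]
  · rw [col_diff hi, if_pos rfl, mul_one]
  · intro j hj hne
    rw [col_diff (Finset.mem_Icc.mp hj).1, if_neg hne, mul_zero]

lemma Ls_col_n (c : ℕ → ℤ) {n : ℕ} (hn : 1 ≤ n) :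
    Ls c n (Col n) = 0 := by
  unfold Ls
  apply Finset.sum_eq_zero
  intro j hj
  have hj' := Finset.mem_Icc.mp hj
  rw [col_diff hj'.1, if_neg (by omega), mul_zero]

lemma F_nonneg {n : ℕ} (hn : 4 ≤ n) {P : ℕ → ℕ} (hP : IsYoung n P)
    (h01 : P 0 = P 1) : 0 ≤ Ls (cF n) n P := by
  apply Finset.sum_nonneg
  intro j hj
  have hj' := Finset.mem_Icc.mp hj
  rcases eq_or_ne j 1 with rfl | hne
  · simp [h01]
  · apply mul_nonneg
    · unfold cF
      have : (2:ℤ) ≤ (j:ℤ) := by omega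
      have : (j:ℤ) ≤ (n:ℤ) - 1 := by omega
      simp only [le_min_iff]
      omega
    · have := young_mono hP (show j - 1 ≤ j by omega)
      omega

lemma G_nonneg {n : ℕ} (hn : 4 ≤ n) {P : ℕ → ℕ} (hP : IsYoung n P)
    (h01 : P (n - 2) = P (n - 1)) : 0 ≤ Ls (cG n) n P := by
  apply Finset.sum_nonneg
  intro j hj
  have hj' := Finset.mem_Icc.mp hj
  rcases eq_or_ne j (n - 1) with rfl | hne
  · have : n - 1 - 1 = n - 2 := by omega
    rw [this, h01]
    simp
  · apply mul_nonneg
    · unfold cG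
      have : (j:ℤ) ≤ (n:ℤ) - 2 := by omega
      simp only [le_min_iff]
      omega
    · have := young_mono hP (show j - 1 ≤ j by omega)
      omega

lemma sub_young {n : ℕ} {P Y : ℕ → ℕ} (hP : IsYoung n P) (hY : IsYoung n Y)
    (hd : ∀ r, Y r - Y (r + 1) ≤ P r - P (r + 1)) :
    (∀ r, Y r ≤ P r) ∧ IsYoung n (fun r => P r - Y r) := by
  have key : ∀ k r, n ≤ r + k → Y r ≤ P r := by
    intro k
    induction k with
    | zero => intro r hr; rw [hY.2 r (by omega), hP.2 r (by omega)]
    | succ k ih =>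
      intro r hr
      by_cases h : n ≤ r + k
      · exact ih r h
      · have h1 := ih (r + 1) (by omega)
        have h2 := hd r
        have h3 := hP.1 r
        have h4 := hY.1 r
        omega
  have hle : ∀ r, Y r ≤ P r := fun r => key n r (by omega)
  refine ⟨hle, ?_, ?_⟩
  · intro r
    simp only []
    have h1 := hle r
    have h2 := hle (r + 1)
    have h3 := hd r
    have h4 := hP.1 r
    have h5 := hY.1 r
    omega
  · intro r hr
    simp only []
    rw [hP.2 r hr, hY.2 r hr]

lemma chain_eq {n : ℕ} {P : ℕ → ℕ}
    (hc : ∀ j, 1 ≤ j → j ≤ n → P (j - 1) = P j) : ∀ k, k ≤ n → P k = P 0 := by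
  intro k
  induction k with
  | zero => intro; rfl
  | succ k ih =>
    intro hk
    have := hc (k + 1) (by omega) hk
    simp at this
    rw [← this, ih (by omega)]

lemma neg_F_of_row1 {n : ℕ} (hn : 4 ≤ n) {A : ℕ → ℕ} (hA : IsYoung n A)
    (h1 : A 1 = 0) (h0 : A ≠ fun _ => 0) : Ls (cF n) n A < 0 := by
  have hA0 : 1 ≤ A 0 := by
    rcases Nat.eq_zero_or_pos (A 0) with h | h
    · exact absurd (young_zero hA h) h0
    · exact h
  have hzero : ∀ r, 1 ≤ r → A r = 0 := by
    intro r hr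
    have := young_mono hA hr
    omega
  unfold Ls
  rw [Finset.sum_eq_single_of_mem 1 (Finset.mem_Icc.mpr ⟨le_refl _, by omega⟩)]
  · have hc1 : cF n 1 = -1 := by unfold cF; simp; omega
    rw [hc1]
    simp [h1]
    omega
  · intro j hj hne
    have hj' := Finset.mem_Icc.mp hj
    rw [hzero (j - 1) (by omega), hzero j (by omega)]
    simp

lemma neg_G_of_only_last {n : ℕ} (hn : 4 ≤ n) {A : ℕ → ℕ} (hA : IsYoung n A)
    (h0 : A ≠ fun _ => 0)
    (hz : ∀ j, 1 ≤ j → j ≤ n → j ≠ n - 1 → A (j - 1) = A j) :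
    Ls (cG n) n A < 0 := by
  have hb : A (n - 1) < A (n - 2) := by
    by_contra h
    push_neg at h
    have heq : A (n - 2) = A (n - 1) := le_antisymm h (young_mono hA (by omega))
    have hall : ∀ j, 1 ≤ j → j ≤ n → A (j - 1) = A j := by
      intro j hj1 hj2
      rcases eq_or_ne j (n - 1) with rfl | hne
      · have : n - 1 - 1 = n - 2 := by omega
        rw [this, heq]
      · exact hz j hj1 hj2 hne
    have := chain_eq hall n (le_refl n)
    have := hA.2 n (le_refl n)
    have : A = fun _ => 0 := young_zero hA (by omega)
    exact h0 this
  unfold Ls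
  rw [Finset.sum_eq_single_of_mem (n - 1) (Finset.mem_Icc.mpr ⟨by omega, le_refl _⟩)]
  · have hc : cG n (n - 1) = -1 := by
      unfold cG
      have : ((n - 1 : ℕ) : ℤ) = (n : ℤ) - 1 := by omega
      rw [this]
      simp
      omega
    rw [hc]
    have : n - 1 - 1 = n - 2 := by omega
    rw [this]
    have : (0:ℤ) < (A (n - 2) : ℤ) - (A (n - 1) : ℤ) := by omega
    nlinarith
  · intro j hj hne
    have hj' := Finset.mem_Icc.mp hj
    rw [hz j hj'.1 (by omega) hne]
    simp

lemma fun_ne_zero {A : ℕ → ℕ} (r : ℕ) (h : A r ≠ 0) : A ≠ fun _ => 0 := by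
  intro he
  exact h (congrFun he r)

lemma col_ne_zero {i : ℕ} (hi : 1 ≤ i) : Col i ≠ fun _ => 0 := by
  apply fun_ne_zero 0
  unfold Col
  rw [if_pos (by omega)]
  omega

lemma cF_one {n : ℕ} (hn : 4 ≤ n) : cF n 1 = -1 := by unfold cF; simp; omega

lemma cF_last {n : ℕ} (hn : 4 ≤ n) : cF n (n - 1) = 1 := by
  unfold cF
  have : ((n - 1 : ℕ) : ℤ) = (n : ℤ) - 1 := by omega
  rw [this]
  omega

lemma cG_one {n : ℕ} (hn : 4 ≤ n) : cG n 1 = 1 := by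
  unfold cG; simp; omega

lemma cG_last {n : ℕ} (hn : 4 ≤ n) : cG n (n - 1) = -1 := by
  unfold cG
  have : ((n - 1 : ℕ) : ℤ) = (n : ℤ) - 1 := by omega
  rw [this]
  omega

lemma Ls_colcol (c : ℕ → ℤ) (n : ℕ) {i j : ℕ} (a : ℕ)
    (hi : 1 ≤ i) (hi' : i ≤ n - 1) (hj : 1 ≤ j) (hj' : j ≤ n - 1) :
    Ls c n (fun r => Col i r + a * Col j r) = c i + a * c j := by
  rw [Ls_add c n (Col i) (fun r => a * Col j r), Ls_smul c n a (Col j),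
    Ls_col c n hi hi', Ls_col c n hj hj']

lemma split1 {n : ℕ} {P : ℕ → ℕ} (hP : IsYoung n P) {i : ℕ}
    (hin : i ≤ n) (hxi : P i < P (i - 1)) :
    (∀ r, Col i r ≤ P r) ∧ IsYoung n (fun r => P r - Col i r) := by
  apply sub_young hP (young_col hin)
  intro r
  by_cases e1 : r + 1 = i
  · subst e1
    simp only [Nat.add_sub_cancel] at hxi
    simp only [Col]
    split_ifs <;> omega
  · simp only [Col]
    split_ifs <;> omega

lemma split2 {n : ℕ} {P : ℕ → ℕ} (hP : IsYoung n P) {i j : ℕ} (a : ℕ)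
    (hin : i ≤ n) (hjn : j ≤ n) (hij : i ≠ j)
    (hxi : P i < P (i - 1)) (hxa : a + P j ≤ P (j - 1)) :
    (∀ r, Col i r + a * Col j r ≤ P r) ∧
      IsYoung n (fun r => P r - (Col i r + a * Col j r)) := by
  apply sub_young hP (young_add (young_col hin) (young_smul a (young_col hjn)))
  intro r
  by_cases e1 : r + 1 = i
  · subst e1
    simp only [Nat.add_sub_cancel] at hxi
    simp only [Col]
    split_ifs <;> omega
  · by_cases e2 : r + 1 = j
    · subst e2
      simp only [Nat.add_sub_cancel] at hxa
      simp only [Col]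
      split_ifs <;> omega
    · simp only [Col]
      split_ifs <;> omega

lemma no_split_col {n i : ℕ} (hi : 1 ≤ i) :
    ∀ A B : ℕ → ℕ, (IsYoung n A ∧ CoordIneq n A) → (IsYoung n B ∧ CoordIneq n B) →
      A ≠ (fun _ => 0) → B ≠ (fun _ => 0) → Col i ≠ (fun r => A r + B r) := by
  intro A B hA hB hAne hBne heq
  have h0 := congrFun heq 0
  unfold Col at h0
  rw [if_pos (by omega)] at h0
  have : A 0 = 0 ∨ B 0 = 0 := by omega
  rcases this with h | h
  · exact hAne (young_zero hA.1 h)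
  · exact hBne (young_zero hB.1 h)

lemma backward {n : ℕ} (hn4 : 4 ≤ n) (P : ℕ → ℕ)
    (h : (∃ i, 2 ≤ i ∧ i ≤ n - 2 ∧ P = Col i) ∨ P = Col n ∨
      (∃ i a : ℕ, 1 ≤ i ∧ i ≤ n ∧ 0 < a ∧ (a : ℤ) ≤ min ((i : ℤ) - 2) ((n : ℤ) - i) ∧
        P = fun r => Col i r + a * Col 1 r) ∨
      (∃ i a : ℕ, 1 ≤ i ∧ i ≤ n ∧ 0 < a ∧ (a : ℤ) ≤ min (i : ℤ) ((n : ℤ) - i - 2) ∧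
        P = fun r => Col i r + a * Col (n - 1) r)) :
    PrimitiveIn (fun R => IsYoung n R ∧ CoordIneq n R) P := by
  rcases h with ⟨i, h2, hn2, rfl⟩ | rfl | ⟨i, a, hi1, hin, ha, haZ, rfl⟩ |
    ⟨i, a, hi1, hin, ha, haZ, rfl⟩
  · -- Col i, 2 ≤ i ≤ n - 2
    have hF : 0 ≤ Ls (cF n) n (Col i) :=
      F_nonneg hn4 (young_col (by omega)) (by unfold Col; split_ifs <;> omega)
    have hG : 0 ≤ Ls (cG n) n (Col i) :=
      G_nonneg hn4 (young_col (by omega)) (by unfold Col; split_ifs <;> omega)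
    exact ⟨⟨young_col (by omega), hF, hG⟩, col_ne_zero (by omega), no_split_col (by omega)⟩
  · -- Col n
    have hF : 0 ≤ Ls (cF n) n (Col n) :=
      F_nonneg hn4 (young_col (le_refl n)) (by unfold Col; split_ifs <;> omega)
    have hG : 0 ≤ Ls (cG n) n (Col n) :=
      G_nonneg hn4 (young_col (le_refl n)) (by unfold Col; split_ifs <;> omega)
    exact ⟨⟨young_col (le_refl n), hF, hG⟩, col_ne_zero (by omega), no_split_col (by omega)⟩
  · -- Col i + a * Col 1
    have hb : 3 ≤ i ∧ i ≤ n - 1 := by omega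
    have hY : IsYoung n (fun r => Col i r + a * Col 1 r) :=
      young_add (young_col hin) (young_smul a (young_col (by omega)))
    have hF : 0 ≤ Ls (cF n) n (fun r => Col i r + a * Col 1 r) := by
      rw [Ls_colcol (cF n) n a (by omega) (by omega) (by omega) (by omega), cF_one hn4]
      unfold cF
      omega
    have hG : 0 ≤ Ls (cG n) n (fun r => Col i r + a * Col 1 r) := by
      rw [Ls_colcol (cG n) n a (by omega) (by omega) (by omega) (by omega), cG_one hn4]
      unfold cG
      omega
    refine ⟨⟨hY, hF, hG⟩, fun_ne_zero 0 (by simp only [Col]; split_ifs <;> omega), ?_⟩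
    intro A B hA hB hAne hBne heq
    have h1 : A 1 + B 1 = 1 := by
      have := congrFun heq 1
      simp only [Col] at this
      rw [if_pos (by omega), if_neg (by omega)] at this
      omega
    have hd : A 1 = 0 ∨ B 1 = 0 := by omega
    rcases hd with hd | hd
    · have hlt := neg_F_of_row1 hn4 hA.1 hd hAne
      have hge : 0 ≤ Ls (cF n) n A := hA.2.1
      omega
    · have hlt := neg_F_of_row1 hn4 hB.1 hd hBne
      have hge : 0 ≤ Ls (cF n) n B := hB.2.1
      omega
  · -- Col i + a * Col (n - 1)
    have hb : 1 ≤ i ∧ i ≤ n - 3 := by omega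
    have hY : IsYoung n (fun r => Col i r + a * Col (n - 1) r) :=
      young_add (young_col hin) (young_smul a (young_col (by omega)))
    have hF : 0 ≤ Ls (cF n) n (fun r => Col i r + a * Col (n - 1) r) := by
      rw [Ls_colcol (cF n) n a (by omega) (by omega) (by omega) (le_refl _), cF_last hn4]
      unfold cF
      omega
    have hG : 0 ≤ Ls (cG n) n (fun r => Col i r + a * Col (n - 1) r) := by
      rw [Ls_colcol (cG n) n a (by omega) (by omega) (by omega) (le_refl _), cG_last hn4]
      unfold cG
      omega
    refine ⟨⟨hY, hF, hG⟩, fun_ne_zero 0 (by simp only [Col]; split_ifs <;> omega), ?_⟩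
    intro A B hA hB hAne hBne heq
    have hval : ∀ r, A r + B r = Col i r + a * Col (n - 1) r :=
      fun r => (congrFun heq r).symm
    have main : ∀ C D : ℕ → ℕ, IsYoung n C → IsYoung n D →
        (∀ r, C r + D r = Col i r + a * Col (n - 1) r) → C ≠ (fun _ => 0) →
        C i = C (i - 1) → 0 ≤ Ls (cG n) n C → False := by
      intro C D hC hD hsum hCne hdi hCG
      have hlt : Ls (cG n) n C < 0 := by
        apply neg_G_of_only_last hn4 hC hCne
        intro j hj1 hj2 hj3
        rcases eq_or_ne j i with rfl | hji
        · exact hdi.symm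
        · have h1 := hsum (j - 1)
          have h2 := hsum j
          have hc := young_mono hC (show j - 1 ≤ j by omega)
          have hd2 := young_mono hD (show j - 1 ≤ j by omega)
          have hcol1 : Col i (j - 1) = Col i j := by
            simp only [Col]; split_ifs <;> omega
          have hcol2 : Col (n - 1) (j - 1) = Col (n - 1) j := by
            simp only [Col]; split_ifs <;> omega
          rw [hcol1, hcol2] at h1
          omega
      omega
    have e1 : A (i - 1) + B (i - 1) = 1 + a := by
      have := hval (i - 1)
      simp only [Col] at this
      rw [if_pos (by omega), if_pos (by omega)] at this
      omega
    have e2 : A i + B i = a := by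
      have := hval i
      simp only [Col] at this
      rw [if_neg (by omega), if_pos (by omega)] at this
      omega
    have mA := young_mono hA.1 (show i - 1 ≤ i by omega)
    have mB := young_mono hB.1 (show i - 1 ≤ i by omega)
    have hor : A i = A (i - 1) ∨ B i = B (i - 1) := by omega
    rcases hor with h | h
    · exact main A B hA.1 hB.1 hval hAne h hA.2.2
    · exact main B A hB.1 hA.1 (fun r => by have := hval r; omega) hBne h hB.2.2

set_option maxHeartbeats 1000000 in
lemma forward {n : ℕ} (hn4 : 4 ≤ n) (P : ℕ → ℕ)
    (h : PrimitiveIn (fun R => IsYoung n R ∧ CoordIneq n R) P) :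
    ((∃ i, 2 ≤ i ∧ i ≤ n - 2 ∧ P = Col i) ∨ P = Col n ∨
      (∃ i a : ℕ, 1 ≤ i ∧ i ≤ n ∧ 0 < a ∧ (a : ℤ) ≤ min ((i : ℤ) - 2) ((n : ℤ) - i) ∧
        P = fun r => Col i r + a * Col 1 r) ∨
      (∃ i a : ℕ, 1 ≤ i ∧ i ≤ n ∧ 0 < a ∧ (a : ℤ) ≤ min (i : ℤ) ((n : ℤ) - i - 2) ∧
        P = fun r => Col i r + a * Col (n - 1) r)) := by
  obtain ⟨⟨hY, hC⟩, hne, hmin⟩ := h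
  have hFP : 0 ≤ Ls (cF n) n P := hC.1
  have hGP : 0 ≤ Ls (cG n) n P := hC.2
  have hP0 : 1 ≤ P 0 := by
    by_contra h0
    exact hne (young_zero hY (by omega))
  by_cases hx1 : P 1 < P 0
  · by_cases hxl : P (n - 1) < P (n - 2)
    · -- Case D : both x_1 > 0 and x_{n-1} > 0
      obtain ⟨hle, hQY⟩ := split2 (i := 1) (j := n - 1) hY 1 (by omega) (by omega) (by omega)
        (show P 1 < P (1 - 1) by rw [show (1:ℕ) - 1 = 0 from rfl]; exact hx1)
        (show 1 + P (n - 1) ≤ P (n - 1 - 1) by rw [show n - 1 - 1 = n - 2 by omega]; omega)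
      set Q : ℕ → ℕ := fun r => P r - (Col 1 r + 1 * Col (n - 1) r) with hQdef
      have hPeq : P = fun r => (Col 1 r + 1 * Col (n - 1) r) + Q r := by
        funext r; have := hle r; simp only [hQdef]; omega
      have hYY : IsYoung n (fun r => Col 1 r + 1 * Col (n - 1) r) :=
        young_add (young_col (by omega)) (young_smul 1 (young_col (by omega)))
      have hFYv := Ls_colcol (cF n) n (i := 1) (j := n - 1) 1 (le_refl _) (by omega) (by omega)
        (le_refl _)
      have hGYv := Ls_colcol (cG n) n (i := 1) (j := n - 1) 1 (le_refl _) (by omega) (by omega)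
        (le_refl _)
      have hFY0 : Ls (cF n) n (fun r => Col 1 r + 1 * Col (n - 1) r) = 0 := by
        rw [hFYv, cF_one hn4, cF_last hn4]; norm_num
      have hGY0 : Ls (cG n) n (fun r => Col 1 r + 1 * Col (n - 1) r) = 0 := by
        rw [hGYv, cG_one hn4, cG_last hn4]; norm_num
      have hYne : (fun r => Col 1 r + 1 * Col (n - 1) r) ≠ (fun _ => 0) :=
        fun_ne_zero 0 (by simp only [Col]; split_ifs <;> omega)
      have hFQ : 0 ≤ Ls (cF n) n Q := by
        have hadd : Ls (cF n) n P
            = Ls (cF n) n (fun r => Col 1 r + 1 * Col (n - 1) r) + Ls (cF n) n Q := by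
          conv_lhs => rw [hPeq]
          exact Ls_add (cF n) n _ Q
        omega
      have hGQ : 0 ≤ Ls (cG n) n Q := by
        have hadd : Ls (cG n) n P
            = Ls (cG n) n (fun r => Col 1 r + 1 * Col (n - 1) r) + Ls (cG n) n Q := by
          conv_lhs => rw [hPeq]
          exact Ls_add (cG n) n _ Q
        omega
      by_cases hQ0 : Q = fun _ => 0
      · right; right; right
        refine ⟨1, 1, le_refl _, by omega, by omega, by omega, ?_⟩
        funext r
        have h1r := congrFun hQ0 r
        simp only [hQdef] at h1r
        have := hle r
        omega
      · exact absurd hPeq (hmin _ Q ⟨hYY, hFY0.ge, hGY0.ge⟩ ⟨hQY, hFQ, hGQ⟩ hYne hQ0)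
    · -- Case B : x_1 > 0, x_{n-1} = 0
      have hlast : P (n - 2) = P (n - 1) :=
        le_antisymm (by omega) (young_mono hY (by omega))
      have hex : ∃ i, 3 ≤ i ∧ i ≤ n - 2 ∧ P i < P (i - 1) := by
        by_contra hcon
        push_neg at hcon
        have hFlt : Ls (cF n) n P < 0 := by
          unfold Ls
          rw [Finset.sum_eq_single_of_mem 1 (Finset.mem_Icc.mpr ⟨le_refl _, by omega⟩)]
          · rw [show (1:ℕ) - 1 = 0 from rfl, cF_one hn4]
            omega
          · intro j hj hne'
            have hj' := Finset.mem_Icc.mp hj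
            rcases eq_or_ne j 2 with rfl | hj2
            · have hz : cF n 2 = 0 := by unfold cF; omega
              rw [hz, zero_mul]
            · have hdz : P (j - 1) = P j := by
                rcases Nat.lt_or_ge j (n - 1) with hlt | hge
                · have := hcon j (by omega) (by omega)
                  have := young_mono hY (show j - 1 ≤ j by omega)
                  omega
                · have hj3 : j = n - 1 := by omega
                  subst hj3
                  rw [show n - 1 - 1 = n - 2 by omega]
                  exact hlast
              rw [hdz, sub_self, mul_zero]
        omega
      obtain ⟨i, hi3, hin2, hxi⟩ := hex
      set a : ℕ := min (P 0 - P 1) (min (i - 2) (n - i)) with hadef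
      have ha1 : 1 ≤ a := by omega
      obtain ⟨hle, hQY⟩ := split2 (j := 1) hY a (by omega) (by omega) (by omega) hxi
        (show a + P 1 ≤ P (1 - 1) by rw [show (1:ℕ) - 1 = 0 from rfl]; omega)
      set Q : ℕ → ℕ := fun r => P r - (Col i r + a * Col 1 r) with hQdef
      have hPeq : P = fun r => (Col i r + a * Col 1 r) + Q r := by
        funext r; have := hle r; simp only [hQdef]; omega
      have hYY : IsYoung n (fun r => Col i r + a * Col 1 r) :=
        young_add (young_col (by omega)) (young_smul a (young_col (by omega)))
      have hFYv := Ls_colcol (cF n) n (i := i) (j := 1) a (by omega) (by omega) (le_refl _)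
        (by omega)
      have hFY0 : 0 ≤ Ls (cF n) n (fun r => Col i r + a * Col 1 r) := by
        rw [hFYv, cF_one hn4]; unfold cF; omega
      have hGY0 : 0 ≤ Ls (cG n) n (fun r => Col i r + a * Col 1 r) :=
        G_nonneg hn4 hYY (by simp only [Col]; split_ifs <;> omega)
      have hYne : (fun r => Col i r + a * Col 1 r) ≠ (fun _ => 0) :=
        fun_ne_zero 0 (by simp only [Col]; split_ifs <;> omega)
      by_cases hcase : P 0 - P 1 ≤ min (i - 2) (n - i)
      · have hQ01 : Q 0 = Q 1 := by
          simp only [hQdef, Col]; split_ifs <;> omega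
        have hQlast : Q (n - 2) = Q (n - 1) := by
          simp only [hQdef, Col]; split_ifs <;> omega
        by_cases hQ0 : Q = fun _ => 0
        · right; right; left
          refine ⟨i, a, by omega, by omega, by omega, by omega, ?_⟩
          funext r
          have h1r := congrFun hQ0 r
          simp only [hQdef] at h1r
          have := hle r
          omega
        · exact absurd hPeq (hmin _ Q ⟨hYY, hFY0, hGY0⟩
            ⟨hQY, F_nonneg hn4 hQY hQ01, G_nonneg hn4 hQY hQlast⟩ hYne hQ0)
      · have hP1 : 1 ≤ P 1 := by
          have := young_mono hY (show 1 ≤ i - 1 by omega)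
          omega
        have hQne : Q ≠ (fun _ => 0) := by
          apply fun_ne_zero 0
          simp only [hQdef, Col]; split_ifs <;> omega
        have hFQ : 0 ≤ Ls (cF n) n Q := by
          have hadd : Ls (cF n) n P
              = Ls (cF n) n (fun r => Col i r + a * Col 1 r) + Ls (cF n) n Q := by
            conv_lhs => rw [hPeq]
            exact Ls_add (cF n) n _ Q
          have hz : Ls (cF n) n (fun r => Col i r + a * Col 1 r) = 0 := by
            rw [hFYv, cF_one hn4]; unfold cF; omega
          omega
        have hGQ : 0 ≤ Ls (cG n) n Q :=
          G_nonneg hn4 hQY (by simp only [hQdef, Col]; split_ifs <;> omega)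
        exact absurd hPeq (hmin _ Q ⟨hYY, hFY0, hGY0⟩ ⟨hQY, hFQ, hGQ⟩ hYne hQne)
  · by_cases hxl : P (n - 1) < P (n - 2)
    · -- Case C : x_1 = 0, x_{n-1} > 0
      have h01 : P 0 = P 1 := le_antisymm (by omega) (young_mono hY (by omega))
      have hex : ∃ i, 2 ≤ i ∧ i ≤ n - 3 ∧ P i < P (i - 1) := by
        by_contra hcon
        push_neg at hcon
        have hGlt : Ls (cG n) n P < 0 := by
          unfold Ls
          rw [Finset.sum_eq_single_of_mem (n - 1) (Finset.mem_Icc.mpr ⟨by omega, le_refl _⟩)]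
          · rw [cG_last hn4, show n - 1 - 1 = n - 2 by omega]
            omega
          · intro j hj hne'
            have hj' := Finset.mem_Icc.mp hj
            rcases eq_or_ne j (n - 2) with rfl | hj2
            · have hz : cG n (n - 2) = 0 := by
                unfold cG
                rw [show ((n - 2 : ℕ) : ℤ) = (n : ℤ) - 2 by omega]
                omega
              rw [hz, zero_mul]
            · have hdz : P (j - 1) = P j := by
                rcases Nat.lt_or_ge j 2 with hlt | hge
                · have hj1 : j = 1 := by omega
                  subst hj1
                  rw [show (1:ℕ) - 1 = 0 from rfl]
                  exact h01
                · have := hcon j hge (by omega)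
                  have := young_mono hY (show j - 1 ≤ j by omega)
                  omega
              rw [hdz, sub_self, mul_zero]
        omega
      obtain ⟨i, hi2, hin3, hxi⟩ := hex
      set a : ℕ := min (P (n - 2) - P (n - 1)) (min i (n - i - 2)) with hadef
      have ha1 : 1 ≤ a := by omega
      obtain ⟨hle, hQY⟩ := split2 (j := n - 1) hY a (by omega) (by omega) (by omega) hxi
        (show a + P (n - 1) ≤ P (n - 1 - 1) by rw [show n - 1 - 1 = n - 2 by omega]; omega)
      set Q : ℕ → ℕ := fun r => P r - (Col i r + a * Col (n - 1) r) with hQdef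
      have hPeq : P = fun r => (Col i r + a * Col (n - 1) r) + Q r := by
        funext r; have := hle r; simp only [hQdef]; omega
      have hYY : IsYoung n (fun r => Col i r + a * Col (n - 1) r) :=
        young_add (young_col (by omega)) (young_smul a (young_col (by omega)))
      have hGYv := Ls_colcol (cG n) n (i := i) (j := n - 1) a (by omega) (by omega) (by omega)
        (le_refl _)
      have hGY0 : 0 ≤ Ls (cG n) n (fun r => Col i r + a * Col (n - 1) r) := by
        rw [hGYv, cG_last hn4]; unfold cG; omega
      have hFY0 : 0 ≤ Ls (cF n) n (fun r => Col i r + a * Col (n - 1) r) :=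
        F_nonneg hn4 hYY (by simp only [Col]; split_ifs <;> omega)
      have hYne : (fun r => Col i r + a * Col (n - 1) r) ≠ (fun _ => 0) :=
        fun_ne_zero 0 (by simp only [Col]; split_ifs <;> omega)
      by_cases hcase : P (n - 2) - P (n - 1) ≤ min i (n - i - 2)
      · have hQ01 : Q 0 = Q 1 := by
          simp only [hQdef, Col]; split_ifs <;> omega
        have hQlast : Q (n - 2) = Q (n - 1) := by
          simp only [hQdef, Col]; split_ifs <;> omega
        by_cases hQ0 : Q = fun _ => 0
        · right; right; right
          refine ⟨i, a, by omega, by omega, by omega, by omega, ?_⟩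
          funext r
          have h1r := congrFun hQ0 r
          simp only [hQdef] at h1r
          have := hle r
          omega
        · exact absurd hPeq (hmin _ Q ⟨hYY, hFY0, hGY0⟩
            ⟨hQY, F_nonneg hn4 hQY hQ01, G_nonneg hn4 hQY hQlast⟩ hYne hQ0)
      · have hQne : Q ≠ (fun _ => 0) := by
          apply fun_ne_zero (n - 2)
          simp only [hQdef, Col]; split_ifs <;> omega
        have hGQ : 0 ≤ Ls (cG n) n Q := by
          have hadd : Ls (cG n) n P
              = Ls (cG n) n (fun r => Col i r + a * Col (n - 1) r) + Ls (cG n) n Q := by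
            conv_lhs => rw [hPeq]
            exact Ls_add (cG n) n _ Q
          have hz : Ls (cG n) n (fun r => Col i r + a * Col (n - 1) r) = 0 := by
            rw [hGYv, cG_last hn4]; unfold cG; omega
          omega
        have hFQ : 0 ≤ Ls (cF n) n Q :=
          F_nonneg hn4 hQY (by simp only [hQdef, Col]; split_ifs <;> omega)
        exact absurd hPeq (hmin _ Q ⟨hYY, hFY0, hGY0⟩ ⟨hQY, hFQ, hGQ⟩ hYne hQne)
    · -- Case A : x_1 = 0, x_{n-1} = 0
      have h01 : P 0 = P 1 := le_antisymm (by omega) (young_mono hY (by omega))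
      have hlast : P (n - 2) = P (n - 1) :=
        le_antisymm (by omega) (young_mono hY (by omega))
      have hex : ∃ i, 1 ≤ i ∧ i ≤ n ∧ P i < P (i - 1) := by
        by_contra hcon
        push_neg at hcon
        have hall : ∀ j, 1 ≤ j → j ≤ n → P (j - 1) = P j := by
          intro j hj1 hj2
          have := hcon j hj1 hj2
          have := young_mono hY (show j - 1 ≤ j by omega)
          omega
        have := chain_eq hall n (le_refl n)
        have := hY.2 n (le_refl n)
        omega
      obtain ⟨i, hi1, hin, hxi⟩ := hex
      have hii : 2 ≤ i := by
        by_contra hcon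
        have h' : i = 1 := by omega
        rw [h', show (1:ℕ) - 1 = 0 from rfl] at hxi
        exact hx1 hxi
      have hin1 : i ≠ n - 1 := by
        intro hcon
        rw [hcon, show n - 1 - 1 = n - 2 by omega] at hxi
        exact hxl hxi
      obtain ⟨hle, hQY⟩ := split1 hY hin hxi
      set Q : ℕ → ℕ := fun r => P r - Col i r with hQdef
      have hPeq : P = fun r => Col i r + Q r := by
        funext r; have := hle r; simp only [hQdef]; omega
      have hColF : 0 ≤ Ls (cF n) n (Col i) :=
        F_nonneg hn4 (young_col hin) (by unfold Col; split_ifs <;> omega)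
      have hColG : 0 ≤ Ls (cG n) n (Col i) :=
        G_nonneg hn4 (young_col hin) (by unfold Col; split_ifs <;> omega)
      by_cases hQ0 : Q = fun _ => 0
      · have hPCol : P = Col i := by
          funext r
          have h1r := congrFun hQ0 r
          simp only [hQdef] at h1r
          have := hle r
          omega
        rcases (show i ≤ n - 2 ∨ i = n by omega) with hc | hc
        · exact Or.inl ⟨i, hii, hc, hPCol⟩
        · exact Or.inr (Or.inl (by rw [hPCol, hc]))
      · have hQ01 : Q 0 = Q 1 := by
          simp only [hQdef, Col]; split_ifs <;> omega
        have hQlast : Q (n - 2) = Q (n - 1) := by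
          simp only [hQdef, Col]; split_ifs <;> omega
        exact absurd hPeq (hmin (Col i) Q ⟨young_col hin, hColF, hColG⟩
          ⟨hQY, F_nonneg hn4 hQY hQ01, G_nonneg hn4 hQY hQlast⟩
          (col_ne_zero (by omega)) hQ0)

end YD12

/-- For `n = 2m`, the basis of the monoid of Young diagrams of order `n` satisfying
`∑ min(i-2, n-i) x_i ≥ 0` and `∑ min(i, n-i-2) x_i ≥ 0` is
`{C_i : 2 ≤ i ≤ n-2} ∪ {C_n} ∪ {C_i + a·C_1 : 0 < a ≤ min(i-2, n-i)} ∪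
{C_i + a·C_{n-1} : 0 < a ≤ min(i, n-i-2)}`. -/
theorem stmt_12 (m n : ℕ) (hm : 2 ≤ m) (hn : n = 2 * m) (P : ℕ → ℕ) :
    PrimitiveIn (fun R => IsYoung n R ∧ CoordIneq n R) P ↔
    ((∃ i, 2 ≤ i ∧ i ≤ n - 2 ∧ P = Col i) ∨ P = Col n ∨
      (∃ i a : ℕ, 1 ≤ i ∧ i ≤ n ∧ 0 < a ∧ (a : ℤ) ≤ min ((i : ℤ) - 2) ((n : ℤ) - i) ∧
        P = fun r => Col i r + a * Col 1 r) ∨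
      (∃ i a : ℕ, 1 ≤ i ∧ i ≤ n ∧ 0 < a ∧ (a : ℤ) ≤ min (i : ℤ) ((n : ℤ) - i - 2) ∧
        P = fun r => Col i r + a * Col (n - 1) r)) := by
  have hn4 : 4 ≤ n := by omega
  exact ⟨YD12.forward hn4 P, YD12.backward hn4 P⟩
end

section
/- The set of pairs (P, Q) of Young diagrams of orders n and n−2 respectively satisfying: (a) Q satisfies a fixed system of homogeneous linear inequalities in its row lengths; (b) #P − #Q is even; (c) Q ⊆ P and P/Q has thickness at most 2; (d) no bridge of P/Q is longer than all other bridges combined (b_i ≤ (1/2)∑_j b_j for all i); is closed under componentwise (rowwise) addition. In particular, condition (d) can be expressed as a finite system of homogeneous linear inequalities in the row lengths of P and Q. -/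
/-- The height of the `j`-th column (columns indexed from `0`). -/
def colH (n : ℕ) (P : ℕ → ℕ) (j : ℕ) : ℕ :=
  ((Finset.range n).filter (fun i => j < P i)).card

/-- The skew diagram `P/Q` has thickness at most `m`. -/
def ThickLE (n : ℕ) (P Q : ℕ → ℕ) (m : ℕ) : Prop :=
  ∀ j, colH n P j ≤ colH n Q j + m

/-- The length of the bridge at height `i` of the skew diagram `P/Q`: the number of
columns whose height in `Q` is `i-1` and in `P` is `i`. -/
def bridge (n : ℕ) (P Q : ℕ → ℕ) (i : ℕ) : ℕ :=
  ((Finset.range (P 0)).filter (fun j => colH n Q j = i - 1 ∧ colH n P j = i)).card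

/-- The set of "good" pairs `(P, Q)`: `P`, `Q` are Young diagrams of orders `n`, `n-2`;
`Q` satisfies the fixed system of homogeneous linear inequalities given by `c`;
`#P - #Q` is even; `Q ⊆ P` with `P/Q` of thickness at most `2`; and no bridge of
`P/Q` is longer than all the others combined. -/
def GoodPair (n : ℕ) {ι : Type*} (c : ι → ℕ → ℤ) (P Q : ℕ → ℕ) : Prop :=
  IsYoung n P ∧ IsYoung (n - 2) Q ∧
  (∀ t : ι, 0 ≤ ∑ i ∈ Finset.range n, c t i * (Q i : ℤ)) ∧
  Even ((ysize n P : ℤ) - (ysize (n - 2) Q : ℤ)) ∧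
  (∀ i, Q i ≤ P i) ∧ ThickLE n P Q 2 ∧
  (∀ i, 1 ≤ i → i ≤ n → 2 * bridge n P Q i ≤ ∑ j ∈ Finset.Icc 1 n, bridge n P Q j)

lemma young_anti_s14 {n : ℕ} {P : ℕ → ℕ} (h : IsYoung n P) : Antitone P := by
  apply antitone_nat_of_succ_le
  exact h.1

lemma young_mono_order {n m : ℕ} {P : ℕ → ℕ} (h : IsYoung n P) (hnm : n ≤ m) :
    IsYoung m P := ⟨h.1, fun i hi => h.2 i (hnm.trans hi)⟩

lemma colH_le_iff {n : ℕ} {P : ℕ → ℕ} (h : IsYoung n P) (i j : ℕ) :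
    colH n P j ≤ i ↔ P i ≤ j := by
  constructor
  · intro hc
    by_contra hlt
    push_neg at hlt
    have hin : i < n := by
      by_contra hni
      push_neg at hni
      rw [h.2 i hni] at hlt; omega
    have hsub : Finset.range (i+1) ⊆ (Finset.range n).filter (fun a => j < P a) := by
      intro a ha
      simp only [Finset.mem_range] at ha
      simp only [Finset.mem_filter, Finset.mem_range]
      exact ⟨by omega, lt_of_lt_of_le hlt (young_anti_s14 h (by omega))⟩
    have := Finset.card_le_card hsub
    simp only [Finset.card_range] at this
    unfold colH at hc; omega
  · intro hPij
    have hsub : (Finset.range n).filter (fun a => j < P a) ⊆ Finset.range i := by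
      intro a ha
      simp only [Finset.mem_filter, Finset.mem_range] at ha ⊢
      by_contra hai
      push_neg at hai
      have := young_anti_s14 h hai
      omega
    have := Finset.card_le_card hsub
    simpa [colH, Finset.card_range] using this

lemma lt_colH_iff {n : ℕ} {P : ℕ → ℕ} (h : IsYoung n P) (i j : ℕ) :
    i < colH n P j ↔ j < P i := by
  rw [← not_le, ← not_le, colH_le_iff h]

lemma thick_row {n : ℕ} {P Q : ℕ → ℕ} (hP : IsYoung n P) (hQ : IsYoung n Q) :
    ThickLE n P Q 2 ↔ ∀ i, P (i + 2) ≤ Q i := by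
  constructor
  · intro hT i
    by_contra hlt
    push_neg at hlt
    have h1 : i + 2 < colH n P (Q i) := (lt_colH_iff hP _ _).2 hlt
    have h2 : colH n Q (Q i) ≤ i := (colH_le_iff hQ _ _).2 le_rfl
    have := hT (Q i)
    omega
  · intro hrow j
    have h2 : P (colH n Q j + 2) ≤ j := le_trans (hrow _) ((colH_le_iff hQ _ _).1 le_rfl)
    exact (colH_le_iff hP _ _).2 h2

lemma bridge_max_le_min {n : ℕ} {P Q : ℕ → ℕ} (hP : IsYoung n P) (hQ : IsYoung n Q)
    (hQP : ∀ i, Q i ≤ P i) (hrow : ∀ i, P (i + 2) ≤ Q i) {i : ℕ} (hi : 1 ≤ i) :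
    max (Q (i-1)) (P i) ≤ min (if i = 1 then P 0 else Q (i-2)) (P (i-1)) := by
  by_cases h1 : i = 1
  · subst h1
    show max (Q 0) (P 1) ≤ min (P 0) (P 0)
    have h2 : Q 0 ≤ P 0 := hQP 0
    have h3 : P 1 ≤ P 0 := hP.1 0
    omega
  · have hi2 : 2 ≤ i := by omega
    rw [if_neg h1]
    have hq : Q (i-1) ≤ Q (i-2) := young_anti_s14 hQ (by omega)
    have hqp : Q (i-1) ≤ P (i-1) := hQP _
    have hpp : P i ≤ P (i-1) := young_anti_s14 hP (by omega)
    have hpq : P i ≤ Q (i-2) := by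
      have := hrow (i-2)
      have : P (i - 2 + 2) = P i := by congr 1; omega
      have := hrow (i-2); omega
    omega

lemma bridge_eq {n : ℕ} {P Q : ℕ → ℕ} (hP : IsYoung n P) (hQ : IsYoung n Q)
    (hQP : ∀ i, Q i ≤ P i) (hrow : ∀ i, P (i + 2) ≤ Q i) {i : ℕ} (hi : 1 ≤ i) :
    bridge n P Q i
      = min (if i = 1 then P 0 else Q (i-2)) (P (i-1)) - max (Q (i-1)) (P i) := by
  have hset : (Finset.range (P 0)).filter (fun j => colH n Q j = i - 1 ∧ colH n P j = i)
      = Finset.Ico (max (Q (i-1)) (P i)) (min (if i = 1 then P 0 else Q (i-2)) (P (i-1))) := by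
    ext j
    simp only [Finset.mem_filter, Finset.mem_range, Finset.mem_Ico, max_le_iff, lt_min_iff]
    have hcP : colH n P j = i ↔ (P i ≤ j ∧ j < P (i-1)) := by
      constructor
      · intro hc
        refine ⟨(colH_le_iff hP _ _).1 (le_of_eq hc), ?_⟩
        have : i - 1 < colH n P j := by omega
        exact (lt_colH_iff hP _ _).1 this
      · rintro ⟨h1, h2⟩
        have ha : colH n P j ≤ i := (colH_le_iff hP _ _).2 h1
        have hb : i - 1 < colH n P j := (lt_colH_iff hP _ _).2 h2
        omega
    have hcQ : colH n Q j = i - 1 ↔ (Q (i-1) ≤ j ∧ (i = 1 ∨ j < Q (i-2))) := by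
      by_cases h1 : i = 1
      · subst h1
        constructor
        · intro hc
          exact ⟨(colH_le_iff hQ _ _).1 (le_of_eq hc), Or.inl rfl⟩
        · rintro ⟨ha, _⟩
          have := (colH_le_iff hQ _ _).2 ha
          omega
      · have hi2 : 2 ≤ i := by omega
        constructor
        · intro hc
          refine ⟨(colH_le_iff hQ _ _).1 (le_of_eq hc), Or.inr ?_⟩
          have : i - 2 < colH n Q j := by omega
          exact (lt_colH_iff hQ _ _).1 this
        · rintro ⟨ha, hb⟩
          rcases hb with hb | hb
          · omega
          · have h1 : colH n Q j ≤ i - 1 := (colH_le_iff hQ _ _).2 ha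
            have h2' : i - 2 < colH n Q j := (lt_colH_iff hQ _ _).2 hb
            omega
    constructor
    · rintro ⟨hj0, hq, hp⟩
      rw [hcP] at hp; rw [hcQ] at hq
      refine ⟨⟨hq.1, hp.1⟩, ?_, hp.2⟩
      by_cases h1 : i = 1
      · rw [if_pos h1]; exact hj0
      · rw [if_neg h1]
        rcases hq.2 with h2 | h2
        · omega
        · exact h2
    · rintro ⟨⟨hq1, hp1⟩, hA, hp2⟩
      have hP0 : P (i-1) ≤ P 0 := young_anti_s14 hP (Nat.zero_le _)
      have hj0 : j < P 0 := by omega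
      refine ⟨hj0, hcQ.2 ⟨hq1, ?_⟩, hcP.2 ⟨hp1, hp2⟩⟩
      by_cases h1 : i = 1
      · exact Or.inl h1
      · rw [if_neg h1] at hA; exact Or.inr hA
  rw [bridge, hset, Nat.card_Ico]

lemma bridgeZ {n : ℕ} {P Q : ℕ → ℕ} (hP : IsYoung n P) (hQ : IsYoung n Q)
    (hQP : ∀ i, Q i ≤ P i) (hrow : ∀ i, P (i + 2) ≤ Q i) {i : ℕ} (hi : 1 ≤ i) :
    (bridge n P Q i : ℤ)
      = min (if i = 1 then (P 0 : ℤ) else (Q (i-2) : ℤ)) (P (i-1) : ℤ)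
        - max ((Q (i-1) : ℤ)) ((P i : ℤ)) := by
  rw [bridge_eq hP hQ hQP hrow hi,
    Nat.cast_sub (bridge_max_le_min hP hQ hQP hrow hi)]
  rw [Nat.cast_min, Nat.cast_max, apply_ite (fun x : ℕ => (x : ℤ))]

lemma sum_Icc_shift (f : ℕ → ℤ) (a b : ℕ) :
    ∑ j ∈ Finset.Icc (a+1) (b+1), f j = ∑ j ∈ Finset.Icc a b, f (j+1) := by
  rw [← Finset.map_add_right_Icc, Finset.sum_map]
  rfl

lemma bridge_sum {n : ℕ} {P Q : ℕ → ℕ} (hn : 4 ≤ n) (hP : IsYoung n P)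
    (hQ2 : IsYoung (n-2) Q) (hQP : ∀ i, Q i ≤ P i) (hrow : ∀ i, P (i + 2) ≤ Q i) :
    (∑ j ∈ Finset.Icc 1 n, (bridge n P Q j : ℤ))
      = (P 0 : ℤ) - ∑ j ∈ Finset.Icc 1 (n-1), |(Q (j-1) : ℤ) - (P j : ℤ)| := by
  have hQ : IsYoung n Q := young_mono_order hQ2 (by omega)
  obtain ⟨m, rfl⟩ : ∃ m, n = m + 2 := ⟨n - 2, by omega⟩
  have hre : ∀ j ∈ Finset.Icc 1 (m+2), (bridge (m+2) P Q j : ℤ)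
      = min (if j = 1 then (P 0 : ℤ) else (Q (j-2) : ℤ)) (P (j-1) : ℤ)
        - max ((Q (j-1) : ℤ)) ((P j : ℤ)) := by
    intro j hj
    simp only [Finset.mem_Icc] at hj
    exact bridgeZ hP hQ hQP hrow hj.1
  rw [Finset.sum_congr rfl hre, Finset.sum_sub_distrib]
  have hins : Finset.Icc 1 (m+2) = insert 1 (Finset.Icc 2 (m+2)) := by
    ext x; simp only [Finset.mem_Icc, Finset.mem_insert]; omega
  have hmin : (∑ j ∈ Finset.Icc 1 (m+2),
      min (if j = 1 then (P 0 : ℤ) else (Q (j-2) : ℤ)) (P (j-1) : ℤ))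
      = (P 0 : ℤ) + ∑ j ∈ Finset.Icc 1 (m+1), min ((Q (j-1) : ℤ)) ((P j : ℤ)) := by
    rw [hins, Finset.sum_insert (by simp), if_pos rfl]
    have h1 : (1:ℕ) - 1 = 0 := rfl
    rw [h1, min_self]
    congr 1
    have h2 : (2:ℕ) = 1 + 1 := rfl
    rw [h2, show m + 2 = (m + 1) + 1 from rfl, sum_Icc_shift]
    apply Finset.sum_congr rfl
    intro j hj
    simp only [Finset.mem_Icc] at hj
    rw [if_neg (by omega), show j + 1 - 2 = j - 1 from rfl,
      show j + 1 - 1 = j from rfl]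
  have hmax : (∑ j ∈ Finset.Icc 1 (m+2), max ((Q (j-1) : ℤ)) ((P j : ℤ)))
      = ∑ j ∈ Finset.Icc 1 (m+1), max ((Q (j-1) : ℤ)) ((P j : ℤ)) := by
    rw [show m + 2 = (m + 1) + 1 from rfl,
      Finset.sum_Icc_succ_top (by omega : 1 ≤ m + 1 + 1)]
    have hq0 : Q (m + 1 + 1 - 1) = 0 := hQ2.2 _ (by omega)
    have hp0 : P (m + 1 + 1) = 0 := hP.2 _ (by omega)
    rw [hq0, hp0]
    simp
  rw [hmin, hmax, show m + 2 - 1 = m + 1 from rfl]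
  rw [add_sub_assoc, ← Finset.sum_sub_distrib]
  congr 1
  rw [← Finset.sum_neg_distrib]
  apply Finset.sum_congr rfl
  intro j hj
  rw [← max_sub_min_eq_abs, max_comm, min_comm]
  ring

def ecoef (i j : ℕ) : ℤ := if j = i - 1 ∨ j = i then 0 else 1

def sgn (b : Bool) : ℤ := if b then 1 else -1

/-- Linear form with absolute values: `S - 2*bridge i`. -/
def LinA (n : ℕ) (P Q : ℕ → ℕ) (i : ℕ) : ℤ :=
  (P 0 : ℤ) - (if i = 1 then (P 0 : ℤ) else (Q (i-2) : ℤ)) - (P (i-1) : ℤ)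
    + (Q (i-1) : ℤ) + (P i : ℤ)
    - ∑ j ∈ Finset.Icc 1 (n-1), ecoef i j * |(Q (j-1) : ℤ) - (P j : ℤ)|

def LinS (n : ℕ) (P Q : ℕ → ℕ) (i : ℕ) (σ : ℕ → Bool) : ℤ :=
  (P 0 : ℤ) - (if i = 1 then (P 0 : ℤ) else (Q (i-2) : ℤ)) - (P (i-1) : ℤ)
    + (Q (i-1) : ℤ) + (P i : ℤ)
    - ∑ j ∈ Finset.Icc 1 (n-1), ecoef i j * (sgn (σ j) * ((Q (j-1) : ℤ) - (P j : ℤ)))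

lemma lin_eq {n : ℕ} {P Q : ℕ → ℕ} (hn : 4 ≤ n) (hP : IsYoung n P)
    (hQ2 : IsYoung (n-2) Q) (hQP : ∀ i, Q i ≤ P i) (hrow : ∀ i, P (i + 2) ≤ Q i)
    {i : ℕ} (hi1 : 1 ≤ i) (hin : i ≤ n) :
    (∑ j ∈ Finset.Icc 1 n, (bridge n P Q j : ℤ)) - 2 * (bridge n P Q i : ℤ)
      = LinA n P Q i := by
  have hQ : IsYoung n Q := young_mono_order hQ2 (by omega)
  set A : ℤ := if i = 1 then (P 0 : ℤ) else (Q (i-2) : ℤ) with hA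
  set d : ℕ → ℤ := fun j => (Q (j-1) : ℤ) - (P j : ℤ) with hd
  have hsplit : ∑ j ∈ Finset.Icc 1 (n-1), (1 - ecoef i j) * |d j|
      = (if i - 1 ∈ Finset.Icc 1 (n-1) then |d (i-1)| else 0)
        + (if i ∈ Finset.Icc 1 (n-1) then |d i| else 0) := by
    have hc : ∀ j ∈ Finset.Icc 1 (n-1), (1 - ecoef i j) * |d j|
        = (if j = i - 1 then |d j| else 0) + (if j = i then |d j| else 0) := by
      intro j _
      by_cases h1 : j = i - 1
      · rw [ecoef, if_pos (Or.inl h1), if_pos h1, if_neg (by omega)]; ring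
      · by_cases h2 : j = i
        · rw [ecoef, if_pos (Or.inr h2), if_neg h1, if_pos h2]; ring
        · rw [ecoef, if_neg (by tauto), if_neg h1, if_neg h2]; ring
    rw [Finset.sum_congr rfl hc, Finset.sum_add_distrib,
      Finset.sum_ite_eq' (Finset.Icc 1 (n-1)) (i-1) (fun j => |d j|),
      Finset.sum_ite_eq' (Finset.Icc 1 (n-1)) i (fun j => |d j|)]
  have habs : |A - (P (i-1) : ℤ)| + |(Q (i-1) : ℤ) - (P i : ℤ)|
      = ∑ j ∈ Finset.Icc 1 (n-1), (1 - ecoef i j) * |d j| := by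
    rw [hsplit]
    by_cases h1 : i = 1
    · subst h1
      rw [if_neg (by simp), if_pos (by simp only [Finset.mem_Icc]; omega)]
      simp [hA, hd]
    · by_cases h2 : i ≤ n - 1
      · rw [if_pos (by simp only [Finset.mem_Icc]; omega),
          if_pos (by simp only [Finset.mem_Icc]; omega)]
        simp only [hA, if_neg h1, hd]
        have : i - 1 - 1 = i - 2 := by omega
        rw [this]
      · have hIn : i = n := by omega
        rw [if_pos (by simp only [Finset.mem_Icc]; omega),
          if_neg (by simp only [Finset.mem_Icc]; omega)]
        have hq0 : Q (i - 1) = 0 := hQ2.2 _ (by omega)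
        have hp0 : P i = 0 := hP.2 _ (by omega)
        simp only [hA, if_neg h1, hd, hq0, hp0]
        have h3 : i - 1 - 1 = i - 2 := by omega
        rw [h3]
        simp
  have hb := bridgeZ hP hQ hQP hrow hi1
  rw [bridge_sum hn hP hQ2 hQP hrow, hb, LinA]
  have hmm1 := min_add_max A ((P (i-1) : ℤ))
  have hmm2 := max_sub_min_eq_abs A ((P (i-1) : ℤ))
  have hmm3 := min_add_max ((Q (i-1) : ℤ)) ((P i : ℤ))
  have hmm4 := max_sub_min_eq_abs ((Q (i-1) : ℤ)) ((P i : ℤ))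
  have hsum : ∑ j ∈ Finset.Icc 1 (n-1), ecoef i j * |d j|
      = (∑ j ∈ Finset.Icc 1 (n-1), |d j|)
        - ∑ j ∈ Finset.Icc 1 (n-1), (1 - ecoef i j) * |d j| := by
    rw [← Finset.sum_sub_distrib]
    apply Finset.sum_congr rfl
    intro j _
    ring
  rw [hsum, ← habs, ← hA]
  have hmm2' : |(P (i-1) : ℤ) - A| = |A - (P (i-1) : ℤ)| := abs_sub_comm _ _
  have hmm4' : |(P i : ℤ) - (Q (i-1) : ℤ)| = |(Q (i-1) : ℤ) - (P i : ℤ)| :=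
    abs_sub_comm _ _
  linarith

lemma linA_iff_sign {n : ℕ} {P Q : ℕ → ℕ} {i : ℕ} :
    0 ≤ LinA n P Q i ↔ ∀ σ : ℕ → Bool, 0 ≤ LinS n P Q i σ := by
  constructor
  · intro h σ
    have hle : ∑ j ∈ Finset.Icc 1 (n-1),
          ecoef i j * (sgn (σ j) * ((Q (j-1) : ℤ) - (P j : ℤ)))
        ≤ ∑ j ∈ Finset.Icc 1 (n-1), ecoef i j * |(Q (j-1) : ℤ) - (P j : ℤ)| := by
      apply Finset.sum_le_sum
      intro j _
      apply mul_le_mul_of_nonneg_left _ (by unfold ecoef; split <;> norm_num)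
      rcases le_or_gt 0 ((Q (j-1) : ℤ) - (P j : ℤ)) with h0 | h0 <;>
        unfold sgn <;> rcases (σ j) with _ | _ <;>
        simp [abs_of_nonneg, abs_of_neg, h0] <;>
        first | (rw [abs_of_nonneg h0]) | skip
      all_goals
        rcases abs_cases ((Q (j-1) : ℤ) - (P j : ℤ)) with ⟨he, _⟩ | ⟨he, _⟩ <;> omega
    unfold LinA at h
    unfold LinS
    linarith
  · intro h
    have := h (fun j => decide (0 ≤ (Q (j-1) : ℤ) - (P j : ℤ)))
    unfold LinS at this
    unfold LinA
    have hcong : ∑ j ∈ Finset.Icc 1 (n-1),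
          ecoef i j * (sgn (decide (0 ≤ (Q (j-1) : ℤ) - (P j : ℤ)))
            * ((Q (j-1) : ℤ) - (P j : ℤ)))
        = ∑ j ∈ Finset.Icc 1 (n-1), ecoef i j * |(Q (j-1) : ℤ) - (P j : ℤ)| := by
      apply Finset.sum_congr rfl
      intro j _
      congr 1
      rcases le_or_gt 0 ((Q (j-1) : ℤ) - (P j : ℤ)) with h0 | h0
      · rw [abs_of_nonneg h0]; simp [sgn, h0]; omega
      · rw [abs_of_neg h0]; simp [sgn, not_le.2 h0]; omega
    rw [hcong] at this
    exact this

lemma linS_congr {n : ℕ} {P Q : ℕ → ℕ} {i : ℕ} {σ σ' : ℕ → Bool}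
    (h : ∀ j, 1 ≤ j → j ≤ n - 1 → σ j = σ' j) :
    LinS n P Q i σ = LinS n P Q i σ' := by
  unfold LinS
  congr 1
  apply Finset.sum_congr rfl
  intro j hj
  simp only [Finset.mem_Icc] at hj
  rw [h j hj.1 hj.2]

lemma linS_add {n : ℕ} {P Q P' Q' : ℕ → ℕ} {i : ℕ} {σ : ℕ → Bool} :
    LinS n (fun r => P r + P' r) (fun r => Q r + Q' r) i σ
      = LinS n P Q i σ + LinS n P' Q' i σ := by
  unfold LinS
  have hsum : ∑ j ∈ Finset.Icc 1 (n-1),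
        ecoef i j * (sgn (σ j) * (((Q (j-1) + Q' (j-1) : ℕ) : ℤ) - ((P j + P' j : ℕ) : ℤ)))
      = (∑ j ∈ Finset.Icc 1 (n-1), ecoef i j * (sgn (σ j) * ((Q (j-1) : ℤ) - (P j : ℤ))))
        + ∑ j ∈ Finset.Icc 1 (n-1), ecoef i j * (sgn (σ j) * ((Q' (j-1) : ℤ) - (P' j : ℤ))) := by
    rw [← Finset.sum_add_distrib]
    apply Finset.sum_congr rfl
    intro j _
    push_cast
    ring
  rw [hsum]
  by_cases h1 : i = 1 <;> simp only [h1, if_pos, if_neg, if_true, if_false] <;>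
    push_cast <;> ring

def phiC (n i : ℕ) (σ : ℕ → Bool) : ℕ → ℤ := fun r =>
  (if r = 0 then 1 else 0) - (if i = 1 ∧ r = 0 then 1 else 0)
    - (if r = i - 1 then 1 else 0) + (if r = i then 1 else 0)
    + (if r ∈ Finset.Icc 1 (n-1) then ecoef i r * sgn (σ r) else 0)

def psiC (n i : ℕ) (σ : ℕ → Bool) : ℕ → ℤ := fun r =>
  - (if 2 ≤ i ∧ r = i - 2 then 1 else 0) + (if r = i - 1 then 1 else 0)
    - (if r + 1 ∈ Finset.Icc 1 (n-1) then ecoef i (r+1) * sgn (σ (r+1)) else 0)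

lemma coef_eval {n : ℕ} {P Q : ℕ → ℕ} (hn : 4 ≤ n) (hP : IsYoung n P)
    {i : ℕ} (σ : ℕ → Bool) (hi1 : 1 ≤ i) (hin : i ≤ n) :
    (∑ r ∈ Finset.range n, phiC n i σ r * (P r : ℤ))
      + ∑ r ∈ Finset.range n, psiC n i σ r * (Q r : ℤ) = LinS n P Q i σ := by
  have e1 : ∑ r ∈ Finset.range n, (if r = 0 then (P r : ℤ) else 0) = (P 0 : ℤ) := by
    rw [Finset.sum_ite_eq' (Finset.range n) 0 (fun r => (P r : ℤ)),
      if_pos (Finset.mem_range.2 (by omega))]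
  have e2 : ∑ r ∈ Finset.range n, (if i = 1 ∧ r = 0 then (P r : ℤ) else 0)
      = if i = 1 then (P 0 : ℤ) else 0 := by
    by_cases hI : i = 1
    · simp only [hI, true_and, if_pos]
      rw [Finset.sum_ite_eq' (Finset.range n) 0 (fun r => (P r : ℤ)),
        if_pos (Finset.mem_range.2 (by omega))]
    · simp [hI]
  have e3 : ∑ r ∈ Finset.range n, (if r = i - 1 then (P r : ℤ) else 0) = (P (i-1) : ℤ) := by
    rw [Finset.sum_ite_eq' (Finset.range n) (i-1) (fun r => (P r : ℤ)),
      if_pos (Finset.mem_range.2 (by omega))]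
  have e4 : ∑ r ∈ Finset.range n, (if r = i then (P r : ℤ) else 0) = (P i : ℤ) := by
    rw [Finset.sum_ite_eq' (Finset.range n) i (fun r => (P r : ℤ))]
    by_cases hI : i < n
    · rw [if_pos (Finset.mem_range.2 hI)]
    · rw [if_neg (by simp only [Finset.mem_range]; omega)]
      have : P i = 0 := hP.2 _ (by omega)
      rw [this]; simp
  have e5 : ∑ r ∈ Finset.range n,
        (if r ∈ Finset.Icc 1 (n-1) then ecoef i r * sgn (σ r) * (P r : ℤ) else 0)
      = ∑ r ∈ Finset.Icc 1 (n-1), ecoef i r * sgn (σ r) * (P r : ℤ) := by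
    rw [Finset.sum_ite_mem, Finset.inter_eq_right.2]
    intro x hx
    simp only [Finset.mem_Icc] at hx
    simp only [Finset.mem_range]
    omega
  have f1 : ∑ r ∈ Finset.range n, (if 2 ≤ i ∧ r = i - 2 then (Q r : ℤ) else 0)
      = if 2 ≤ i then (Q (i-2) : ℤ) else 0 := by
    by_cases hI : 2 ≤ i
    · simp only [hI, true_and, if_pos]
      rw [Finset.sum_ite_eq' (Finset.range n) (i-2) (fun r => (Q r : ℤ)),
        if_pos (Finset.mem_range.2 (by omega))]
    · simp [hI]
  have f2 : ∑ r ∈ Finset.range n, (if r = i - 1 then (Q r : ℤ) else 0) = (Q (i-1) : ℤ) := by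
    rw [Finset.sum_ite_eq' (Finset.range n) (i-1) (fun r => (Q r : ℤ)),
      if_pos (Finset.mem_range.2 (by omega))]
  have f3 : ∑ r ∈ Finset.range n,
        (if r + 1 ∈ Finset.Icc 1 (n-1) then ecoef i (r+1) * sgn (σ (r+1)) * (Q r : ℤ) else 0)
      = ∑ j ∈ Finset.Icc 1 (n-1), ecoef i j * sgn (σ j) * (Q (j-1) : ℤ) := by
    have hmem : ∀ r : ℕ, (r + 1 ∈ Finset.Icc 1 (n-1)) ↔ r ∈ Finset.range (n-1) := by
      intro r
      simp only [Finset.mem_Icc, Finset.mem_range]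
      omega
    have hcong : ∀ r ∈ Finset.range n,
        (if r + 1 ∈ Finset.Icc 1 (n-1) then ecoef i (r+1) * sgn (σ (r+1)) * (Q r : ℤ) else 0)
        = (if r ∈ Finset.range (n-1) then ecoef i (r+1) * sgn (σ (r+1)) * (Q r : ℤ) else 0) := by
      intro r _
      by_cases h : r + 1 ∈ Finset.Icc 1 (n-1)
      · rw [if_pos h, if_pos ((hmem r).1 h)]
      · rw [if_neg h, if_neg (fun hc => h ((hmem r).2 hc))]
    rw [Finset.sum_congr rfl hcong, Finset.sum_ite_mem, Finset.inter_eq_right.2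
      (by intro x hx; simp only [Finset.mem_range] at hx ⊢; omega)]
    apply Finset.sum_nbij' (i := fun k => k + 1) (j := fun j => j - 1)
    · intro a ha; simp only [Finset.mem_range] at ha; simp only [Finset.mem_Icc]; omega
    · intro a ha; simp only [Finset.mem_Icc] at ha; simp only [Finset.mem_range]; omega
    · intro a _; omega
    · intro a ha; simp only [Finset.mem_Icc] at ha; omega
    · intro a _
      have h2 : a + 1 - 1 = a := by omega
      rw [h2]
  have hphi : ∑ r ∈ Finset.range n, phiC n i σ r * (P r : ℤ)
      = (P 0 : ℤ) - (if i = 1 then (P 0 : ℤ) else 0) - (P (i-1) : ℤ) + (P i : ℤ)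
        + ∑ r ∈ Finset.Icc 1 (n-1), ecoef i r * sgn (σ r) * (P r : ℤ) := by
    unfold phiC
    simp only [sub_mul, add_mul, ite_mul, one_mul, zero_mul]
    rw [Finset.sum_add_distrib, Finset.sum_add_distrib, Finset.sum_sub_distrib,
      Finset.sum_sub_distrib, e1, e2, e3, e4, e5]
  have hpsi : ∑ r ∈ Finset.range n, psiC n i σ r * (Q r : ℤ)
      = -(if 2 ≤ i then (Q (i-2) : ℤ) else 0) + (Q (i-1) : ℤ)
        - ∑ j ∈ Finset.Icc 1 (n-1), ecoef i j * sgn (σ j) * (Q (j-1) : ℤ) := by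
    unfold psiC
    simp only [sub_mul, add_mul, neg_mul, ite_mul, one_mul, zero_mul]
    rw [Finset.sum_sub_distrib, Finset.sum_add_distrib, Finset.sum_neg_distrib,
      f1, f2, f3]
  rw [hphi, hpsi]
  unfold LinS
  have hsum : ∑ j ∈ Finset.Icc 1 (n-1),
        ecoef i j * (sgn (σ j) * ((Q (j-1) : ℤ) - (P j : ℤ)))
      = (∑ j ∈ Finset.Icc 1 (n-1), ecoef i j * sgn (σ j) * (Q (j-1) : ℤ))
        - ∑ j ∈ Finset.Icc 1 (n-1), ecoef i j * sgn (σ j) * (P j : ℤ) := by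
    rw [← Finset.sum_sub_distrib]
    apply Finset.sum_congr rfl
    intro j _
    ring
  rw [hsum]
  have eA : (if i = 1 then (P 0 : ℤ) else (Q (i-2) : ℤ))
      = (if i = 1 then (P 0 : ℤ) else 0) + (if 2 ≤ i then (Q (i-2) : ℤ) else 0) := by
    by_cases hI : i = 1
    · rw [if_pos hI, if_pos hI, if_neg (by omega)]; ring
    · rw [if_neg hI, if_neg hI, if_pos (by omega)]; ring
  rw [eA]
  ring

lemma bridge_cond_iff_linA {n : ℕ} {P Q : ℕ → ℕ} (hn : 4 ≤ n) (hP : IsYoung n P)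
    (hQ2 : IsYoung (n-2) Q) (hQP : ∀ i, Q i ≤ P i) (hrow : ∀ i, P (i + 2) ≤ Q i) :
    (∀ i, 1 ≤ i → i ≤ n →
        2 * bridge n P Q i ≤ ∑ j ∈ Finset.Icc 1 n, bridge n P Q j)
      ↔ ∀ i, 1 ≤ i → i ≤ n → 0 ≤ LinA n P Q i := by
  constructor
  · intro h i h1 h2
    rw [← lin_eq hn hP hQ2 hQP hrow h1 h2]
    have := h i h1 h2
    have hcast2 : ((∑ j ∈ Finset.Icc 1 n, bridge n P Q j : ℕ) : ℤ)
        = ∑ j ∈ Finset.Icc 1 n, (bridge n P Q j : ℤ) := Nat.cast_sum _ _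
    have : ((2 * bridge n P Q i : ℕ) : ℤ) ≤ ((∑ j ∈ Finset.Icc 1 n, bridge n P Q j : ℕ) : ℤ) :=
      Nat.cast_le.2 this
    push_cast at this
    linarith
  · intro h i h1 h2
    have h0 := h i h1 h2
    rw [← lin_eq hn hP hQ2 hQP hrow h1 h2] at h0
    have hcast2 : ((∑ j ∈ Finset.Icc 1 n, bridge n P Q j : ℕ) : ℤ)
        = ∑ j ∈ Finset.Icc 1 n, (bridge n P Q j : ℤ) := Nat.cast_sum _ _
    have hgoal : ((2 * bridge n P Q i : ℕ) : ℤ) ≤ ((∑ j ∈ Finset.Icc 1 n, bridge n P Q j : ℕ) : ℤ) := by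
      push_cast
      linarith
    exact_mod_cast hgoal

def extBool (n : ℕ) (σ : Fin n → Bool) : ℕ → Bool :=
  fun j => if h : j < n then σ ⟨j, h⟩ else true

lemma exists_linear (n : ℕ) (hn : 4 ≤ n) :
    ∃ (N : ℕ) (φ ψ : Fin N → ℕ → ℤ),
      ∀ P Q : ℕ → ℕ, IsYoung n P → IsYoung (n - 2) Q → (∀ i, Q i ≤ P i) →
        ThickLE n P Q 2 →
        ((∀ i, 1 ≤ i → i ≤ n →
            2 * bridge n P Q i ≤ ∑ j ∈ Finset.Icc 1 n, bridge n P Q j) ↔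
          ∀ t : Fin N, 0 ≤ ∑ i ∈ Finset.range n, φ t i * (P i : ℤ)
              + ∑ i ∈ Finset.range n, ψ t i * (Q i : ℤ)) := by
  obtain ⟨e⟩ : Nonempty (Fin (Fintype.card (Fin n × (Fin n → Bool)))
      ≃ (Fin n × (Fin n → Bool))) := ⟨(Fintype.equivFin _).symm⟩
  refine ⟨_, fun t => phiC n ((e t).1.val + 1) (extBool n (e t).2),
    fun t => psiC n ((e t).1.val + 1) (extBool n (e t).2), ?_⟩
  intro P Q hP hQ2 hQP hth
  have hQn : IsYoung n Q := young_mono_order hQ2 (by omega)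
  have hrow : ∀ i, P (i + 2) ≤ Q i := (thick_row hP hQn).1 hth
  rw [bridge_cond_iff_linA hn hP hQ2 hQP hrow]
  constructor
  · intro h t
    have h1 : 1 ≤ (e t).1.val + 1 := by omega
    have h2 : (e t).1.val + 1 ≤ n := (e t).1.isLt
    rw [coef_eval hn hP _ h1 h2]
    exact (linA_iff_sign).1 (h _ h1 h2) _
  · intro h i h1 h2
    rw [linA_iff_sign]
    intro σ
    have hlt : i - 1 < n := by omega
    have ht := h (e.symm (⟨i - 1, hlt⟩, fun k => σ k.val))
    simp only [Equiv.apply_symm_apply] at ht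
    have hi : i - 1 + 1 = i := by omega
    rw [hi] at ht
    rw [coef_eval hn hP _ (by omega) (by omega)] at ht
    have hcong : ∀ j, 1 ≤ j → j ≤ n - 1 → σ j = extBool n (fun k : Fin n => σ k.val) j := by
      intro j hj1 hj2
      unfold extBool
      rw [dif_pos (by omega)]
    rw [linS_congr hcong]
    exact ht

/-- The set of good pairs is closed under rowwise addition; moreover the no-majority
bridge condition can be expressed, on pairs of Young diagrams with `P/Q` of thickness
at most `2`, as a finite system of homogeneous linear inequalities in the row lengths
of `P` and `Q`. -/
theorem stmt_14 (n : ℕ) (hn : 4 ≤ n) {ι : Type*} [Fintype ι] (c : ι → ℕ → ℤ) :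
    (∀ P Q P' Q' : ℕ → ℕ, GoodPair n c P Q → GoodPair n c P' Q' →
      GoodPair n c (fun r => P r + P' r) (fun r => Q r + Q' r)) ∧
    (∃ (N : ℕ) (φ ψ : Fin N → ℕ → ℤ),
      ∀ P Q : ℕ → ℕ, IsYoung n P → IsYoung (n - 2) Q → (∀ i, Q i ≤ P i) →
        ThickLE n P Q 2 →
        ((∀ i, 1 ≤ i → i ≤ n →
            2 * bridge n P Q i ≤ ∑ j ∈ Finset.Icc 1 n, bridge n P Q j) ↔
          ∀ t : Fin N, 0 ≤ ∑ i ∈ Finset.range n, φ t i * (P i : ℤ)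
              + ∑ i ∈ Finset.range n, ψ t i * (Q i : ℤ))) := by
  constructor
  · rintro P Q P' Q' ⟨hP, hQ, hc, hev, hle, hth, hbr⟩ ⟨hP', hQ', hc', hev', hle', hth', hbr'⟩
    have hPs : IsYoung n (fun r => P r + P' r) :=
      ⟨fun i => add_le_add (hP.1 i) (hP'.1 i),
       fun i hi => by simp [hP.2 i hi, hP'.2 i hi]⟩
    have hQs : IsYoung (n - 2) (fun r => Q r + Q' r) :=
      ⟨fun i => add_le_add (hQ.1 i) (hQ'.1 i),
       fun i hi => by simp [hQ.2 i hi, hQ'.2 i hi]⟩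
    have hQn : IsYoung n Q := young_mono_order hQ (by omega)
    have hQn' : IsYoung n Q' := young_mono_order hQ' (by omega)
    have hQsn : IsYoung n (fun r => Q r + Q' r) := young_mono_order hQs (by omega)
    have hrow : ∀ i, P (i + 2) ≤ Q i := (thick_row hP hQn).1 hth
    have hrow' : ∀ i, P' (i + 2) ≤ Q' i := (thick_row hP' hQn').1 hth'
    have hrowS : ∀ i, P (i + 2) + P' (i + 2) ≤ Q i + Q' i :=
      fun i => add_le_add (hrow i) (hrow' i)
    have hthS : ThickLE n (fun r => P r + P' r) (fun r => Q r + Q' r) 2 :=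
      (thick_row hPs hQsn).2 hrowS
    have hleS : ∀ i, Q i + Q' i ≤ P i + P' i := fun i => add_le_add (hle i) (hle' i)
    refine ⟨hPs, hQs, ?_, ?_, hleS, hthS, ?_⟩
    · intro t
      show 0 ≤ ∑ i ∈ Finset.range n, c t i * ((Q i + Q' i : ℕ) : ℤ)
      have hsplit : ∑ i ∈ Finset.range n, c t i * ((Q i + Q' i : ℕ) : ℤ)
          = (∑ i ∈ Finset.range n, c t i * (Q i : ℤ))
            + ∑ i ∈ Finset.range n, c t i * (Q' i : ℤ) := by
        rw [← Finset.sum_add_distrib]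
        apply Finset.sum_congr rfl
        intro j _
        push_cast
        ring
      rw [hsplit]
      exact add_nonneg (hc t) (hc' t)
    · have hy1 : (ysize n (fun r => P r + P' r) : ℤ) = (ysize n P : ℤ) + (ysize n P' : ℤ) := by
        unfold ysize
        push_cast
        rw [← Finset.sum_add_distrib]
      have hy2 : (ysize (n-2) (fun r => Q r + Q' r) : ℤ)
          = (ysize (n-2) Q : ℤ) + (ysize (n-2) Q' : ℤ) := by
        unfold ysize
        push_cast
        rw [← Finset.sum_add_distrib]
      rw [hy1, hy2]
      have hre : (ysize n P : ℤ) + (ysize n P' : ℤ) - ((ysize (n-2) Q : ℤ) + (ysize (n-2) Q' : ℤ))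
          = ((ysize n P : ℤ) - (ysize (n-2) Q : ℤ))
            + ((ysize n P' : ℤ) - (ysize (n-2) Q' : ℤ)) := by ring
      rw [hre]
      exact hev.add hev'
    · rw [bridge_cond_iff_linA hn hPs hQs hleS hrowS]
      intro i h1 h2
      rw [linA_iff_sign]
      intro σ
      have a1 := (linA_iff_sign).1 ((bridge_cond_iff_linA hn hP hQ hle hrow).1 hbr i h1 h2) σ
      have a2 := (linA_iff_sign).1 ((bridge_cond_iff_linA hn hP' hQ' hle' hrow').1 hbr' i h1 h2) σ
      rw [linS_add]
      exact add_nonneg a1 a2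
  · exact exists_linear n hn
end

section
/- Let W be the Weyl group of a root system of type B_r, C_r, or D_r acting on ℝ^r with standard basis e_1,...,e_r, and let X = {−1,0,1}^r \ {0}. Define a section ξ: X → W by: for ν ∈ X corresponding to the strongly standard column C of height k (listing the nonzero coordinates as signed symbols in increasing order), ξ(ν) sends i to the i-th symbol of C for i ≤ k (except possibly i = r in type D), sends the remaining indices to the unused signed letters with increasing absolute values and negative signs (except possibly at i = r in type D, where the sign is determined by the determinant condition). Then ν lies in the Weyl chamber ξ(ν)·h^+ for every ν ∈ X, i.e., ξ is a section of the orbit map. -/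
lemma card_lt_filter (r m : ℕ) (hm : m ≤ r) :
    (Finset.univ.filter (fun j : Fin r => (j : ℕ) < m)).card = m := by
  have h : (Finset.univ.filter (fun j : Fin r => (j : ℕ) < m)).card = (Finset.range m).card := by
    refine Finset.card_nbij (i := fun j => (j : ℕ)) ?_ ?_ ?_
    · intro j hj
      simp only [Finset.mem_coe, Finset.mem_filter, Finset.mem_univ, true_and] at hj
      simpa using hj
    · intro a ha b hb hab
      exact Fin.val_injective hab
    · intro a ha
      simp only [Finset.coe_range, Set.mem_Iio] at ha
      exact ⟨⟨a, lt_of_lt_of_le ha hm⟩, by simp [ha], rfl⟩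
  rw [h, Finset.card_range]

/-- Encoding of the signed alphabet `1 < ⋯ < r < r̄ < ⋯ < 1̄` into `ℤ`: the letter `s`
is encoded by the integer `s`, the letter `s̄` by `-s`; `skey` gives the position of a
letter in the total order on the alphabet. -/
def skey (r : ℕ) (z : ℤ) : ℤ := if 0 < z then z else 2 * (r : ℤ) + 1 + z

/-- The section `ξ : X → W` of the orbit map is indeed a section. Here `W` is the Weyl
group of type `B_r`/`C_r` (`D = false`: all signed permutations) or `D_r` (`D = true`:
signed permutations with an even number of sign changes), an element `w` of which is
encoded by a permutation `σ` of `Fin r` together with signs `ε` (so `w·e_i = ε i •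
e_{σ i}`).  Given a nonzero vector `ν` with coordinates in `{-1,0,1}`, whose associated
strongly standard column has height `k`, any `w = (σ, ε)` satisfying the defining
conditions of `ξ(ν)` — the first `k` letters `w·1, …, w·k` are the symbols of the
column of `ν` in increasing order (except possibly the sign at position `r` in type
`D`), and the remaining letters have increasing absolute values and negative signs
(except possibly the sign at position `r` in type `D`) — satisfies `ν ∈ w·h⁺`. -/
theorem stmt_16 (r : ℕ) (hr : 0 < r) (D : Bool) (hD2 : D = true → 2 ≤ r)
    (ν : Fin r → ℤ) (hν1 : ∀ i, ν i = -1 ∨ ν i = 0 ∨ ν i = 1) (hν0 : ν ≠ 0)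
    (k : ℕ) (hk : k = (Finset.univ.filter (fun s => ν s ≠ 0)).card)
    (σ : Equiv.Perm (Fin r)) (ε : Fin r → ℤ) (hε : ∀ i, ε i = 1 ∨ ε i = -1)
    (hW : D = true → Even ((Finset.univ.filter (fun i => ε i = -1)).card))
    (hsupp : ∀ i : Fin r, (i : ℕ) < k → ν (σ i) ≠ 0)
    (hsign : ∀ i : Fin r, (i : ℕ) < k → ((i : ℕ) + 1 ≠ r ∨ D = false) → ε i = ν (σ i))
    (hord : ∀ i i' : Fin r, i < i' → (i' : ℕ) < k →
      skey r (ε i * (((σ i : ℕ) : ℤ) + 1)) < skey r (ε i' * (((σ i' : ℕ) : ℤ) + 1)))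
    (htord : ∀ i i' : Fin r, k ≤ (i : ℕ) → i < i' → σ i < σ i')
    (htsign : ∀ i : Fin r, k ≤ (i : ℕ) → ((i : ℕ) + 1 ≠ r ∨ D = false) → ε i = -1) :
    ∃ x : Fin r → ℤ,
      (∀ i j : Fin r, i ≤ j → ((j : ℕ) + 1 < r ∨ D = false) → x j ≤ x i) ∧
      (D = false → ∀ i, 0 ≤ x i) ∧
      (D = true → ∀ i : Fin r, (i : ℕ) + 1 < r →
        x ⟨r - 1, Nat.sub_lt hr one_pos⟩ ≤ x i ∧ -x ⟨r - 1, Nat.sub_lt hr one_pos⟩ ≤ x i) ∧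
      (∀ i : Fin r, ν i = ε (σ.symm i) * x (σ.symm i)) := by
  -- k ≤ r
  have hkr : k ≤ r := by
    rw [hk]
    calc (Finset.univ.filter (fun s => ν s ≠ 0)).card ≤ Finset.univ.card :=
      Finset.card_le_card (Finset.filter_subset _ _)
    _ = r := by simp
  -- for i ≥ k, ν (σ i) = 0
  have hzero : ∀ i : Fin r, k ≤ (i : ℕ) → ν (σ i) = 0 := by
    intro i hi
    by_contra h
    set T := Finset.univ.filter (fun j : Fin r => (j : ℕ) < k) with hT
    set S := Finset.univ.filter (fun s => ν s ≠ 0) with hS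
    have hsub : T.image σ ⊆ S := by
      intro s hs
      simp only [Finset.mem_image, hT, hS, Finset.mem_filter, Finset.mem_univ, true_and] at hs ⊢
      obtain ⟨j, hj, rfl⟩ := hs
      exact hsupp j hj
    have hcard : S.card ≤ (T.image σ).card := by
      rw [Finset.card_image_of_injective _ σ.injective, hT, card_lt_filter r k hkr, ← hk]
    have heq := Finset.eq_of_subset_of_card_le hsub hcard
    have hmem : σ i ∈ T.image σ := by
      rw [heq, hS]
      simp [h]
    simp only [Finset.mem_image, hT, Finset.mem_filter, Finset.mem_univ, true_and] at hmem
    obtain ⟨j, hj, hji⟩ := hmem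
    have := σ.injective hji
    omega
  -- define x
    -- x i = ε i * ν (σ i)
  refine ⟨fun i => ε i * ν (σ i), ?_, ?_, ?_, ?_⟩
  · -- key value computation
    intro i j hij hj
    simp only
    have hvals : ∀ l : Fin r, ((l : ℕ) + 1 ≠ r ∨ D = false) →
        ε l * ν (σ l) = if (l : ℕ) < k then 1 else 0 := by
      intro l hl
      by_cases hlk : (l : ℕ) < k
      · rw [if_pos hlk, hsign l hlk hl]
        rcases hν1 (σ l) with h | h | h
        · rw [h]; ring
        · exact absurd h (hsupp l hlk)
        · rw [h]; ring
      · rw [if_neg hlk, hzero l (le_of_not_gt hlk), mul_zero]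
    have hcondj : ((j : ℕ) + 1 ≠ r ∨ D = false) := by
      rcases hj with h | h
      · exact Or.inl (Nat.ne_of_lt h)
      · exact Or.inr h
    have hcondi : ((i : ℕ) + 1 ≠ r ∨ D = false) := by
      rcases hj with h | h
      · exact Or.inl (by have := Fin.le_iff_val_le_val.mp hij; omega)
      · exact Or.inr h
    rw [hvals i hcondi, hvals j hcondj]
    have := Fin.le_iff_val_le_val.mp hij
    split_ifs <;> omega
  · -- D = false nonneg
    intro hDf i
    simp only
    have hvals : ε i * ν (σ i) = if (i : ℕ) < k then 1 else 0 := by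
      by_cases hlk : (i : ℕ) < k
      · rw [if_pos hlk, hsign i hlk (Or.inr hDf)]
        rcases hν1 (σ i) with h | h | h
        · rw [h]; ring
        · exact absurd h (hsupp i hlk)
        · rw [h]; ring
      · rw [if_neg hlk, hzero i (le_of_not_gt hlk), mul_zero]
    rw [hvals]; split_ifs <;> omega
  · -- D = true condition
    intro hDt i hi
    simp only
    set l : Fin r := ⟨r - 1, Nat.sub_lt hr one_pos⟩ with hl
    have hil : (i : ℕ) < k → ε i * ν (σ i) = 1 := by
      intro hlk
      rw [hsign i hlk (Or.inl (by omega))]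
      rcases hν1 (σ i) with h | h | h
      · rw [h]; ring
      · exact absurd h (hsupp i hlk)
      · rw [h]; ring
    have hi0 : k ≤ (i : ℕ) → ε i * ν (σ i) = 0 := fun h => by
      rw [hzero i h, mul_zero]
    have habs : ε l * ν (σ l) = 1 ∨ ε l * ν (σ l) = -1 ∨ ε l * ν (σ l) = 0 := by
      rcases hν1 (σ l) with h | h | h <;> rcases hε l with h' | h' <;>
        rw [h, h'] <;> norm_num
    by_cases hlk : (l : ℕ) < k
    · -- then i < k too since i < l
      have hik : (i : ℕ) < k := by
        have : (i : ℕ) < (l : ℕ) := by simp only [hl]; omega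
        omega
      rw [hil hik]
      rcases habs with h | h | h <;> rw [h] <;> norm_num
    · have h0 : ν (σ l) = 0 := hzero l (le_of_not_gt hlk)
      rw [h0, mul_zero]
      by_cases hik : (i : ℕ) < k
      · rw [hil hik]; norm_num
      · rw [hi0 (le_of_not_gt hik)]; norm_num
  · intro i
    simp only
    have h1 : σ (σ.symm i) = i := σ.apply_symm_apply i
    rw [h1, ← mul_assoc]
    rcases hε (σ.symm i) with h | h <;> rw [h] <;> ring
end
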